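/- arXiv:2211.07689 — 6 statements merged into one kernel-verified Lean document; each statement's English description precedes it below -/
import Mathlib

section
/- Let G be an n-vertex (ε,s)-expander, let U ⊆ V(G) with |U| ≤ (2/3)n, let F be a set of at most s|U|/2 edges of G, and let 0 < d ≤ s. Then either |N_{G−F}(U)| ≥ s|U|/(2d), or |N_{G−F,d}(U)| ≥ ε|U|/(log n)². -/
/-- The set of vertices outside `U` with a neighbour in `U`, i.e. `N_G(U)`. -/
def nbhdOutside {V : Type} (G : SimpleGraph V) (U : Set V) : Set V :=
  {v | v ∉ U ∧ ∃ u ∈ U, G.Adj v u}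

/-- An `(ε,s)`-expander: for every `U ⊆ V(G)` with `1 ≤ |U| ≤ (2/3)|V(G)|` and every
`F ⊆ E(G)` with `|F| ≤ s|U|`, we have `|N_{G−F}(U)| ≥ ε|U|/(log₂ |V(G)|)²`. -/
def IsExpander {V : Type} (G : SimpleGraph V) (ε s : ℝ) : Prop :=
  ∀ (U : Set V) (F : Set (Sym2 V)), F ⊆ G.edgeSet →
    1 ≤ U.ncard → (U.ncard : ℝ) ≤ 2 / 3 * (Nat.card V : ℝ) →
    (F.ncard : ℝ) ≤ s * (U.ncard : ℝ) →
    ε * (U.ncard : ℝ) / (Real.logb 2 (Nat.card V : ℝ)) ^ 2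
      ≤ ((nbhdOutside (G.deleteEdges F) U).ncard : ℝ)

/-- The robust neighbourhood `N_{G,d}(U)`: vertices outside `U` with at least `d`
neighbours in `U`. -/
def robustNbhd {V : Type} (G : SimpleGraph V) (d : ℝ) (U : Set V) : Set V :=
  {v | v ∉ U ∧ d ≤ ((G.neighborSet v ∩ U).ncard : ℝ)}

/-- In an `(ε,s)`-expander, for `|U| ≤ (2/3)n`, `|F| ≤ s|U|/2` and `0 < d ≤ s`, either
`|N_{G−F}(U)| ≥ s|U|/(2d)` or `|N_{G−F,d}(U)| ≥ ε|U|/(log n)²`. -/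
theorem expansion_alternative {V : Type} [Fintype V] (G : SimpleGraph V) (n : ℕ)
    (hn : Nat.card V = n) (ε s : ℝ) (hG : IsExpander G ε s)
    (U : Set V) (hU : (U.ncard : ℝ) ≤ 2 / 3 * n)
    (F : Set (Sym2 V)) (hFE : F ⊆ G.edgeSet) (hF : (F.ncard : ℝ) ≤ s * (U.ncard : ℝ) / 2)
    (d : ℝ) (hd : 0 < d) (hds : d ≤ s) :
    s * (U.ncard : ℝ) / (2 * d) ≤ ((nbhdOutside (G.deleteEdges F) U).ncard : ℝ) ∨
    ε * (U.ncard : ℝ) / (Real.logb 2 n) ^ 2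
      ≤ ((robustNbhd (G.deleteEdges F) d U).ncard : ℝ) := by
  classical
  set G' := G.deleteEdges F with hG'
  by_cases hleft : s * (U.ncard : ℝ) / (2 * d) ≤ ((nbhdOutside G' U).ncard : ℝ)
  · exact Or.inl hleft
  right
  push_neg at hleft
  have hNnn : (0 : ℝ) ≤ ((nbhdOutside G' U).ncard : ℝ) := Nat.cast_nonneg _
  have h2d : (0 : ℝ) < 2 * d := by linarith
  have hsU : 0 < s * (U.ncard : ℝ) := by
    have := (div_pos_iff).mp (lt_of_le_of_lt hNnn hleft)
    rcases this with ⟨h1, _⟩ | ⟨_, h2⟩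
    · exact h1
    · linarith
  have hU1 : 1 ≤ U.ncard := by
    by_contra h
    push_neg at h
    interval_cases h' : U.ncard
    · simp [h'] at hsU
  -- the set of "weak" boundary vertices
  set B : Set V := nbhdOutside G' U \ robustNbhd G' d U with hB
  have hBfin := B.toFinite
  -- edges from weak boundary vertices into U
  set EB : Finset (Sym2 V) :=
    hBfin.toFinset.biUnion
      (fun v => ((G'.neighborSet v ∩ U).toFinite.toFinset.image (fun u => s(v, u)))) with hEB
  have hBsub : B ⊆ nbhdOutside G' U := Set.diff_subset
  have hBcard : (B.ncard : ℝ) ≤ ((nbhdOutside G' U).ncard : ℝ) := by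
    exact_mod_cast Set.ncard_le_ncard hBsub (Set.toFinite _)
  have hEBcard : ((EB.card : ℝ)) ≤ d * (B.ncard : ℝ) := by
    have h1 : EB.card ≤ ∑ v ∈ hBfin.toFinset,
        ((G'.neighborSet v ∩ U).toFinite.toFinset.image (fun u => s(v, u))).card :=
      Finset.card_biUnion_le
    have h2 : ∀ v ∈ hBfin.toFinset,
        (((G'.neighborSet v ∩ U).toFinite.toFinset.image (fun u => s(v, u))).card : ℝ) ≤ d := by
      intro v hv
      rw [Set.Finite.mem_toFinset] at hv
      have hvrob : ¬ (d ≤ ((G'.neighborSet v ∩ U).ncard : ℝ)) := by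
        intro hcontra
        exact hv.2 ⟨hv.1.1, hcontra⟩
      push_neg at hvrob
      calc (((G'.neighborSet v ∩ U).toFinite.toFinset.image (fun u => s(v, u))).card : ℝ)
          ≤ ((G'.neighborSet v ∩ U).toFinite.toFinset.card : ℝ) := by
            exact_mod_cast Finset.card_image_le
        _ = ((G'.neighborSet v ∩ U).ncard : ℝ) := by
            norm_cast
            exact (Set.ncard_eq_toFinset_card _ _).symm
        _ ≤ d := le_of_lt hvrob
    calc ((EB.card : ℝ)) ≤ ∑ v ∈ hBfin.toFinset,
          (((G'.neighborSet v ∩ U).toFinite.toFinset.image (fun u => s(v, u))).card : ℝ) := by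
          exact_mod_cast h1
      _ ≤ ∑ _v ∈ hBfin.toFinset, d := Finset.sum_le_sum h2
      _ = d * (B.ncard : ℝ) := by
          rw [Finset.sum_const, nsmul_eq_mul]
          rw [Set.ncard_eq_toFinset_card' B]
          rw [Set.Finite.card_toFinset]
          ring_nf
          simp [mul_comm]
  set F' : Set (Sym2 V) := F ∪ ↑EB with hF'
  have hEBsubG : (↑EB : Set (Sym2 V)) ⊆ G.edgeSet := by
    intro e he
    simp only [Finset.coe_biUnion, Set.mem_iUnion, Finset.mem_coe, Finset.mem_image,
      Set.Finite.mem_toFinset, EB] at he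
    obtain ⟨v, hv, u, hu, rfl⟩ := he
    have hadj : G'.Adj v u := hu.1
    rw [hG', SimpleGraph.deleteEdges_adj] at hadj
    exact G.mem_edgeSet.mpr hadj.1
  have hF'E : F' ⊆ G.edgeSet := Set.union_subset hFE hEBsubG
  have hF'card : (F'.ncard : ℝ) ≤ s * (U.ncard : ℝ) := by
    have hle : F'.ncard ≤ F.ncard + (↑EB : Set (Sym2 V)).ncard :=
      Set.ncard_union_le F _
    have hEBn : ((↑EB : Set (Sym2 V)).ncard) = EB.card := Set.ncard_coe_finset EB
    have : (F'.ncard : ℝ) ≤ (F.ncard : ℝ) + (EB.card : ℝ) := by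
      rw [← hEBn]; exact_mod_cast hle
    have hdB : d * (B.ncard : ℝ) < s * (U.ncard : ℝ) / 2 := by
      calc d * (B.ncard : ℝ) ≤ d * ((nbhdOutside G' U).ncard : ℝ) := by
            exact mul_le_mul_of_nonneg_left hBcard (le_of_lt hd)
        _ < d * (s * (U.ncard : ℝ) / (2 * d)) := by
            exact mul_lt_mul_of_pos_left hleft hd
        _ = s * (U.ncard : ℝ) / 2 := by field_simp
    linarith
  have key := hG U F' hF'E hU1 (by rw [hn]; exact hU) hF'card
  rw [hn] at key
  have hsub : nbhdOutside (G.deleteEdges F') U ⊆ robustNbhd G' d U := by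
    rintro v ⟨hvU, u, huU, hadj⟩
    rw [SimpleGraph.deleteEdges_adj] at hadj
    obtain ⟨hGadj, hnotF'⟩ := hadj
    have hnotF : s(v, u) ∉ F := fun h => hnotF' (Or.inl h)
    have hG'adj : G'.Adj v u := by
      rw [hG', SimpleGraph.deleteEdges_adj]; exact ⟨hGadj, hnotF⟩
    by_contra hvrob
    have hvB : v ∈ B := ⟨⟨hvU, u, huU, hG'adj⟩, hvrob⟩
    apply hnotF'
    right
    simp only [Finset.mem_coe, Finset.mem_biUnion, Set.Finite.mem_toFinset,
      Finset.mem_image, EB]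
    exact ⟨v, hvB, u, ⟨hG'adj, huU⟩, rfl⟩
  have hmono : ((nbhdOutside (G.deleteEdges F') U).ncard : ℝ)
      ≤ ((robustNbhd G' d U).ncard : ℝ) := by
    exact_mod_cast Set.ncard_le_ncard hsub (Set.toFinite _)
  linarith
end

section
/- Given an n-vertex graph G, a non-negative integer s and ε ≤ 2^{-5}, one can delete at most 4sn·log n edges from G so that the remaining edges can be partitioned into the edge sets of graphs G₁, …, G_r such that Σ_{i=1}^{r} |V(G_i)| ≤ 2n and each G_i is an (ε,s)-expander. -/
lemma aux_logb_1116 : Real.logb 2 (11/16 : ℝ) ≤ -(1/2) := by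
  rw [Real.logb_le_iff_le_rpow (by norm_num) (by norm_num)]
  have h2 : ((2:ℝ) ^ (-(1/2) : ℝ)) ^ (2:ℕ) = 1/2 := by
    rw [← Real.rpow_natCast ((2:ℝ) ^ (-(1/2):ℝ)) 2, ← Real.rpow_mul (by norm_num)]
    norm_num
  have hpos : (0:ℝ) < (2:ℝ) ^ (-(1/2):ℝ) := Real.rpow_pos_of_pos (by norm_num) _
  nlinarith [sq_nonneg ((2:ℝ) ^ (-(1/2):ℝ) - 11/16)]

lemma aux_R1 (M u ν La Lb L : ℝ) (hL : 1 ≤ L) (hu1 : 1 ≤ u)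
    (hν0 : 0 ≤ ν) (hν : 32 * L^2 * ν ≤ u)
    (hLa : La ≤ L - 1/2) (hLb : Lb ≤ L) (hLb0 : 0 ≤ Lb)
    (huM : u ≤ M) :
    u/4 + (u+ν)*La + (M-u)*Lb ≤ M*L := by
  have h1 : (u+ν)*La ≤ (u+ν)*(L - 1/2) :=
    mul_le_mul_of_nonneg_left hLa (by linarith)
  have h2 : (M-u)*Lb ≤ (M-u)*L := mul_le_mul_of_nonneg_left hLb (by linarith)
  have h3 : ν * L ≤ u/32 := by nlinarith
  nlinarith

lemma aux_R2 (M u ν La Lb L SA SB : ℝ) (hL : 1 ≤ L) (hu1 : 1 ≤ u)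
    (hν0 : 0 ≤ ν) (hν : 32 * L^2 * ν ≤ u)
    (hLa : La ≤ L - 1/2) (hLa0 : 0 ≤ La) (hLb : Lb ≤ L) (hLb0 : 0 ≤ Lb)
    (huM : u ≤ M)
    (hSA : SA ≤ 2*(u+ν) - (u+ν)/(La+1)) (hSB : SB ≤ 2*(M-u) - (M-u)/(Lb+1)) :
    SA + SB ≤ 2*M - M/(L+1) := by
  have hLa1 : (0:ℝ) < La + 1 := by linarith
  have hLb1 : (0:ℝ) < Lb + 1 := by linarith
  have hL1 : (0:ℝ) < L + 1 := by linarith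
  have hL12 : (0:ℝ) < L + 1/2 := by linarith
  have h1 : u/(L+1/2) ≤ (u+ν)/(La+1) :=
    div_le_div₀ (by linarith) (by linarith) hLa1 (by linarith)
  have h2 : (M-u)/(L+1) ≤ (M-u)/(Lb+1) :=
    div_le_div₀ (by linarith) (by linarith) hLb1 (by linarith)
  have key : 2*ν ≤ u/(L+1/2) - u/(L+1) := by
    have heq : u/(L+1/2) - u/(L+1) = u * (1/2) / ((L+1/2)*(L+1)) := by
      field_simp; ring
    rw [heq, le_div_iff₀ (by positivity)]
    nlinarith
  have hMsplit : M/(L+1) = u/(L+1) + (M-u)/(L+1) := by field_simp; ring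
  linarith

lemma fin_cases_add {p q : ℕ} (i : Fin (p+q)) :
    (∃ j : Fin p, i = Fin.castAdd q j) ∨ (∃ j : Fin q, i = Fin.natAdd p j) :=
  Fin.addCases (fun j => Or.inl ⟨j, rfl⟩) (fun j => Or.inr ⟨j, rfl⟩) i

set_option maxHeartbeats 1600000 in
/-- Main recursion: decomposition of an arbitrary subgraph. -/
lemma decomp {V : Type} [Fintype V] (G : SimpleGraph V) (s : ℕ) (ε : ℝ)
    (hε : ε ≤ (2:ℝ)^(-5:ℤ)) :
    ∀ m : ℕ, ∀ K : G.Subgraph, K.verts.ncard = m →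
    ∃ (D : Set (Sym2 V)) (r : ℕ) (H : Fin r → G.Subgraph),
      D ⊆ K.edgeSet ∧
      (D.ncard : ℝ) ≤ 4 * s * m * Real.logb 2 m ∧
      (∀ i j, i ≠ j → Disjoint (H i).edgeSet (H j).edgeSet) ∧
      (∀ i, Disjoint (H i).edgeSet D) ∧
      ((⋃ i, (H i).edgeSet) ∪ D = K.edgeSet) ∧
      ((∑ i, ((H i).verts.ncard : ℝ)) ≤ 2*m - m/(Real.logb 2 m + 1)) ∧
      (∀ i, IsExpander (H i).coe ε s) := by
  intro m
  induction m using Nat.strong_induction_on with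
  | _ m IH =>
  intro K hKm
  by_cases hexp : IsExpander K.coe ε s
  · -- base case : K itself is an expander
    refine ⟨∅, 1, fun _ => K, Set.empty_subset _, ?_, ?_, ?_, ?_, ?_, fun _ => hexp⟩
    · have h0 : (0:ℝ) ≤ 4 * s * m * Real.logb 2 m := by
        rcases Nat.eq_zero_or_pos m with h | h
        · simp [h]
        · have : (0:ℝ) ≤ Real.logb 2 m :=
            Real.logb_nonneg (by norm_num) (by exact_mod_cast h)
          positivity
      simpa using h0
    · intro i j hij; exact absurd (Subsingleton.elim i j) hij
    · intro i; simp
    · simp [Set.iUnion_const]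
    · have hL0 : (0:ℝ) ≤ Real.logb 2 m := by
        rcases Nat.eq_zero_or_pos m with h | h
        · simp [h]
        · exact Real.logb_nonneg (by norm_num) (by exact_mod_cast h)
      have hdiv : (m:ℝ)/(Real.logb 2 m + 1) ≤ m :=
        div_le_self (by positivity) (by linarith)
      simp only [Finset.sum_const, Finset.card_univ, Fintype.card_fin, one_smul]
      rw [hKm]
      push_cast
      linarith
  · -- recursive case
    unfold IsExpander at hexp
    push_neg at hexp
    obtain ⟨U, F, hFsub, hU1, hU2, hFcard, hNlt⟩ := hexp
    set N : Set ↥K.verts := nbhdOutside ((K.coe).deleteEdges F) U with hN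
    set U' : Set V := Subtype.val '' U with hU'
    set F' : Set (Sym2 V) := Sym2.map Subtype.val '' F with hF'
    set N' : Set V := Subtype.val '' N with hN'
    -- basic membership translations
    have hmemU : ∀ x : ↥K.verts, (x:V) ∈ U' ↔ x ∈ U := by
      intro x
      constructor
      · rintro ⟨a, ha, hax⟩
        rwa [Subtype.val_injective hax] at ha
      · intro hx; exact ⟨x, hx, rfl⟩
    have hmemF : ∀ x y : ↥K.verts, s((x:V),(y:V)) ∈ F' ↔ s(x,y) ∈ F := by
      intro x y
      constructor
      · rintro ⟨e, he, heq⟩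
        have : e = s(x,y) := by
          apply Sym2.map.injective Subtype.val_injective
          rw [heq, Sym2.map_pair_eq]
        rwa [this] at he
      · intro hx; exact ⟨s(x,y), hx, Sym2.map_pair_eq _ _ _⟩
    have hU'K : U' ⊆ K.verts := by rintro x ⟨a, _, rfl⟩; exact a.2
    have hN'K : N' ⊆ K.verts := by rintro x ⟨a, _, rfl⟩; exact a.2
    have hN'U' : Disjoint U' N' := by
      rw [Set.disjoint_left]
      rintro x hxU ⟨a, haN, rfl⟩
      exact haN.1 ((hmemU a).mp hxU)
    have hN'mem : ∀ x y : V, x ∉ U' → y ∈ U' → K.Adj x y → s(x,y) ∉ F' → x ∈ N' := by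
      intro x y hxU hyU hadj hF
      have hxK : x ∈ K.verts := K.edge_vert hadj
      have hyK : y ∈ K.verts := K.edge_vert hadj.symm
      refine ⟨⟨x, hxK⟩, ⟨?_, ⟨⟨y, hyK⟩, (hmemU _).mp hyU, ?_⟩⟩, rfl⟩
      · intro hmem; exact hxU ((hmemU _).mpr hmem)
      · rw [SimpleGraph.deleteEdges_adj]
        exact ⟨hadj, fun hc => hF ((hmemF _ _).mpr hc)⟩
    -- the two pieces
    set KA : G.Subgraph :=
      { verts := U' ∪ N'
        Adj := fun x y => K.Adj x y ∧ s(x,y) ∉ F' ∧ (x ∈ U' ∨ y ∈ U')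
        adj_sub := fun h => K.adj_sub h.1
        edge_vert := by
          rintro x y ⟨hadj, hF, hor⟩
          by_cases hx : x ∈ U'
          · exact Or.inl hx
          · rcases hor with h | h
            · exact absurd h hx
            · exact Or.inr (hN'mem x y hx h hadj hF)
        symm := by
          constructor
          rintro x y ⟨h1, h2, h3⟩
          exact ⟨h1.symm, by rwa [Sym2.eq_swap], h3.symm⟩ } with hKA
    set KB : G.Subgraph :=
      { verts := K.verts \ U'
        Adj := fun x y => K.Adj x y ∧ s(x,y) ∉ F' ∧ x ∉ U' ∧ y ∉ U'
        adj_sub := fun h => K.adj_sub h.1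
        edge_vert := fun h => ⟨K.edge_vert h.1, h.2.2.1⟩
        symm := by
          constructor
          rintro x y ⟨h1, h2, h3, h4⟩
          exact ⟨h1.symm, by rwa [Sym2.eq_swap], h4, h3⟩ } with hKB
    -- edge set relations
    have hKAe : ∀ x y : V, s(x,y) ∈ KA.edgeSet ↔
        (K.Adj x y ∧ s(x,y) ∉ F' ∧ (x ∈ U' ∨ y ∈ U')) := by
      intro x y; rfl
    have hKBe : ∀ x y : V, s(x,y) ∈ KB.edgeSet ↔
        (K.Adj x y ∧ s(x,y) ∉ F' ∧ x ∉ U' ∧ y ∉ U') := by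
      intro x y; rfl
    have hF'K : F' ⊆ K.edgeSet := by
      rintro e ⟨e₀, he₀, rfl⟩
      induction e₀ using Sym2.ind with
      | _ x y =>
        rw [Sym2.map_pair_eq, SimpleGraph.Subgraph.mem_edgeSet]
        exact hFsub he₀
    have hKAK : KA.edgeSet ⊆ K.edgeSet := by
      intro e he
      induction e using Sym2.ind with
      | _ x y => exact ((hKAe x y).mp he).1
    have hKBK : KB.edgeSet ⊆ K.edgeSet := by
      intro e he
      induction e using Sym2.ind with
      | _ x y => exact ((hKBe x y).mp he).1
    have hdisjAB : Disjoint KA.edgeSet KB.edgeSet := by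
      rw [Set.disjoint_left]
      intro e heA heB
      induction e using Sym2.ind with
      | _ x y =>
        obtain ⟨-, -, hor⟩ := (hKAe x y).mp heA
        obtain ⟨-, -, hx, hy⟩ := (hKBe x y).mp heB
        tauto
    have hdisjAF : Disjoint KA.edgeSet F' := by
      rw [Set.disjoint_left]
      intro e heA heF
      induction e using Sym2.ind with
      | _ x y => exact ((hKAe x y).mp heA).2.1 heF
    have hdisjBF : Disjoint KB.edgeSet F' := by
      rw [Set.disjoint_left]
      intro e heA heF
      induction e using Sym2.ind with
      | _ x y => exact ((hKBe x y).mp heA).2.1 heF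
    have hcover : (KA.edgeSet ∪ KB.edgeSet) ∪ F' = K.edgeSet := by
      apply Set.Subset.antisymm
      · exact Set.union_subset (Set.union_subset hKAK hKBK) hF'K
      · intro e he
        induction e using Sym2.ind with
        | _ x y =>
          rw [SimpleGraph.Subgraph.mem_edgeSet] at he
          by_cases hF : s(x,y) ∈ F'
          · exact Or.inr hF
          · by_cases hU : x ∈ U' ∨ y ∈ U'
            · exact Or.inl (Or.inl ((hKAe x y).mpr ⟨he, hF, hU⟩))
            · push_neg at hU
              exact Or.inl (Or.inr ((hKBe x y).mpr ⟨he, hF, hU.1, hU.2⟩))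
    -- cardinalities
    have hUcard : U'.ncard = U.ncard := Set.ncard_image_of_injective _ Subtype.val_injective
    have hNcard : N'.ncard = N.ncard := Set.ncard_image_of_injective _ Subtype.val_injective
    have hFcard' : F'.ncard = F.ncard :=
      Set.ncard_image_of_injective _ (Sym2.map.injective Subtype.val_injective)
    have hmA : KA.verts.ncard = U.ncard + N.ncard := by
      show (U' ∪ N').ncard = _
      rw [Set.ncard_union_eq hN'U' (Set.toFinite _) (Set.toFinite _), hUcard, hNcard]
    have hmB : KB.verts.ncard = m - U.ncard := by
      show (K.verts \ U').ncard = _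
      rw [Set.ncard_diff hU'K (Set.toFinite _), hUcard, hKm]
    -- numeric setup
    set u : ℕ := U.ncard with hu
    set νn : ℕ := N.ncard with hν
    set L : ℝ := Real.logb 2 m with hLdef
    have hKcard : (Nat.card ↥K.verts : ℝ) = (m:ℝ) := by
      rw [Nat.card_coe_set_eq, hKm]
    rw [hKcard] at hU2 hNlt
    have hm1R : (1:ℝ) ≤ 2/3 * m := le_trans (by exact_mod_cast hU1) hU2
    have hm2 : 2 ≤ m := by
      by_contra h
      push_neg at h
      interval_cases m <;> norm_num at hm1R
    have hmpos : (0:ℝ) < m := by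
      have : (2:ℝ) ≤ m := by exact_mod_cast hm2
      linarith
    have hL : 1 ≤ L := by
      rw [hLdef, Real.le_logb_iff_rpow_le (by norm_num) hmpos, Real.rpow_one]
      exact_mod_cast hm2
    have hu1R : (1:ℝ) ≤ u := by exact_mod_cast hU1
    have hL2 : (0:ℝ) < L^2 := by positivity
    have hε32 : ε ≤ 1/32 := by
      have h : ((2:ℝ)^(-5:ℤ)) = 1/32 := by norm_num
      rw [h] at hε
      exact hε
    have hν' : 32 * L^2 * (νn:ℝ) ≤ u := by
      have h1 : ε * u ≤ u/32 := by nlinarith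
      have h2 : ε * u / L^2 ≤ (u/32) / L^2 := by gcongr
      have h3 : (νn:ℝ) < (u/32) / L^2 := lt_of_lt_of_le hNlt h2
      have h4 : (νn:ℝ) * L^2 < u/32 := (lt_div_iff₀ hL2).mp h3
      nlinarith
    have hL21 : (1:ℝ) ≤ L^2 := by nlinarith
    have hν32 : (νn:ℝ) ≤ (u:ℝ)/32 := by
      have hh : (1:ℝ) * (32*(νn:ℝ)) ≤ L^2 * (32*(νn:ℝ)) :=
        mul_le_mul_of_nonneg_right hL21 (by positivity)
      nlinarith
    set mA : ℕ := KA.verts.ncard with hmAdef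
    set mB : ℕ := KB.verts.ncard with hmBdef
    have hmAR : (mA:ℝ) = (u:ℝ) + νn := by rw [hmA]; push_cast; ring
    have hmA1 : 1 ≤ mA := by
      have : (1:ℝ) ≤ (mA:ℝ) := by
        rw [hmAR]
        have : (0:ℝ) ≤ (νn:ℝ) := by positivity
        linarith
      exact_mod_cast this
    have hmAle : (mA:ℝ) ≤ 11/16 * m := by rw [hmAR]; linarith
    have hmAlt : mA < m := by
      have : (mA:ℝ) < m := by linarith
      exact_mod_cast this
    have hultm : u < m := by
      have : (u:ℝ) < m := by linarith
      exact_mod_cast this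
    have hmBR : (mB:ℝ) = (m:ℝ) - u := by
      rw [hmB, Nat.cast_sub hultm.le]
    have hmB1 : 1 ≤ mB := by omega
    have hmBlt : mB < m := by
      have : (mB:ℝ) < m := by rw [hmBR]; linarith
      exact_mod_cast this
    set La : ℝ := Real.logb 2 mA with hLadef
    set Lb : ℝ := Real.logb 2 mB with hLbdef
    have hmApos : (0:ℝ) < mA := by
      have : (1:ℝ) ≤ (mA:ℝ) := by exact_mod_cast hmA1
      linarith
    have hmBpos : (0:ℝ) < mB := by
      have : (1:ℝ) ≤ (mB:ℝ) := by exact_mod_cast hmB1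
      linarith
    have hLa0 : 0 ≤ La := Real.logb_nonneg (by norm_num) (by exact_mod_cast hmA1)
    have hLb0 : 0 ≤ Lb := Real.logb_nonneg (by norm_num) (by exact_mod_cast hmB1)
    have hLa : La ≤ L - 1/2 := by
      have h1 : La ≤ Real.logb 2 (11/16 * m) :=
        Real.logb_le_logb_of_le (by norm_num) hmApos hmAle
      have h2 : Real.logb 2 ((11/16 : ℝ) * m) = Real.logb 2 (11/16) + Real.logb 2 m :=
        Real.logb_mul (by norm_num) (ne_of_gt hmpos)
      have h3 := aux_logb_1116
      rw [h2] at h1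
      rw [hLdef]
      linarith
    have hLb : Lb ≤ L := by
      apply Real.logb_le_logb_of_le (by norm_num) hmBpos
      have : mB ≤ m := hmBlt.le
      exact_mod_cast this
    -- apply induction hypothesis
    obtain ⟨DA, rA, HA, hA1, hA2, hA3, hA4, hA5, hA6, hA7⟩ := IH mA hmAlt KA rfl
    obtain ⟨DB, rB, HB, hB1, hB2, hB3, hB4, hB5, hB6, hB7⟩ := IH mB hmBlt KB rfl
    rw [← hLadef] at hA2 hA6
    rw [← hLbdef] at hB2 hB6
    have hHAsub : ∀ i, (HA i).edgeSet ⊆ KA.edgeSet := by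
      intro i e he
      rw [← hA5]
      exact Or.inl (Set.mem_iUnion.mpr ⟨i, he⟩)
    have hHBsub : ∀ i, (HB i).edgeSet ⊆ KB.edgeSet := by
      intro i e he
      rw [← hB5]
      exact Or.inl (Set.mem_iUnion.mpr ⟨i, he⟩)
    have hDAsub : DA ⊆ KA.edgeSet := by
      intro e he; rw [← hA5]; exact Or.inr he
    have hDBsub : DB ⊆ KB.edgeSet := by
      intro e he; rw [← hB5]; exact Or.inr he
    refine ⟨F' ∪ (DA ∪ DB), rA + rB, Fin.append HA HB, ?_, ?_, ?_, ?_, ?_, ?_, ?_⟩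
    · exact Set.union_subset hF'K (Set.union_subset (hDAsub.trans hKAK) (hDBsub.trans hKBK))
    · -- cardinality of deleted edges
      have hcard1 : ((F' ∪ (DA ∪ DB)).ncard : ℝ) ≤ (F'.ncard : ℝ) + DA.ncard + DB.ncard := by
        have t1 := Set.ncard_union_le F' (DA ∪ DB)
        have t2 := Set.ncard_union_le DA DB
        have h : (F' ∪ (DA ∪ DB)).ncard ≤ F'.ncard + (DA.ncard + DB.ncard) :=
          le_trans t1 (Nat.add_le_add_left t2 _)
        have hR : (((F' ∪ (DA ∪ DB)).ncard : ℕ) : ℝ)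
            ≤ ((F'.ncard + (DA.ncard + DB.ncard) : ℕ) : ℝ) := Nat.cast_le.mpr h
        push_cast at hR
        linarith
      have hFc : (F'.ncard : ℝ) ≤ (s:ℝ) * u := by
        rw [hFcard']
        exact_mod_cast hFcard
      have base := aux_R1 (m:ℝ) u νn La Lb L hL hu1R (by positivity) hν' hLa hLb hLb0
        (by linarith)
      have hs0 : (0:ℝ) ≤ 4 * s := by positivity
      have hmul := mul_le_mul_of_nonneg_left base hs0
      have hA2' : (DA.ncard : ℝ) ≤ 4 * s * ((u:ℝ) + νn) * La := by
        rw [← hmAR]; exact hA2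
      have hB2' : (DB.ncard : ℝ) ≤ 4 * s * ((m:ℝ) - u) * Lb := by
        rw [← hmBR]; exact hB2
      calc ((F' ∪ (DA ∪ DB)).ncard : ℝ)
          ≤ (F'.ncard : ℝ) + DA.ncard + DB.ncard := hcard1
        _ ≤ (s:ℝ) * u + 4 * s * ((u:ℝ) + νn) * La + 4 * s * ((m:ℝ) - u) * Lb := by
            linarith
        _ ≤ 4 * s * m * L := by linarith [hmul]
    · -- pairwise disjointness
      intro i j hij
      rcases fin_cases_add i with ⟨i', rfl⟩ | ⟨i', rfl⟩ <;>
        rcases fin_cases_add j with ⟨j', rfl⟩ | ⟨j', rfl⟩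
      · rw [Fin.append_left, Fin.append_left]
        exact hA3 i' j' (fun h => hij (congrArg _ h))
      · rw [Fin.append_left, Fin.append_right]
        exact hdisjAB.mono (hHAsub i') (hHBsub j')
      · rw [Fin.append_right, Fin.append_left]
        exact (hdisjAB.symm).mono (hHBsub i') (hHAsub j')
      · rw [Fin.append_right, Fin.append_right]
        exact hB3 i' j' (fun h => hij (congrArg _ h))
    · -- each part disjoint from D
      intro i
      rcases fin_cases_add i with ⟨i', rfl⟩ | ⟨i', rfl⟩
      · rw [Fin.append_left]
        refine Set.disjoint_union_right.mpr ⟨hdisjAF.mono_left (hHAsub i'),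
          Set.disjoint_union_right.mpr ⟨hA4 i', hdisjAB.mono (hHAsub i') hDBsub⟩⟩
      · rw [Fin.append_right]
        refine Set.disjoint_union_right.mpr ⟨hdisjBF.mono_left (hHBsub i'),
          Set.disjoint_union_right.mpr ⟨hdisjAB.symm.mono (hHBsub i') hDAsub, hB4 i'⟩⟩
    · -- union covers
      have hsplit : (⋃ i, ((Fin.append HA HB) i).edgeSet) =
          (⋃ i, (HA i).edgeSet) ∪ ⋃ i, (HB i).edgeSet := by
        apply Set.Subset.antisymm
        · refine Set.iUnion_subset fun i => ?_
          rcases fin_cases_add i with ⟨i', rfl⟩ | ⟨i', rfl⟩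
          · rw [Fin.append_left]
            exact (Set.subset_iUnion (fun k => (HA k).edgeSet) i').trans Set.subset_union_left
          · rw [Fin.append_right]
            exact (Set.subset_iUnion (fun k => (HB k).edgeSet) i').trans Set.subset_union_right
        · refine Set.union_subset (Set.iUnion_subset fun i' => ?_)
            (Set.iUnion_subset fun i' => ?_)
          · exact fun e he => Set.mem_iUnion.mpr ⟨Fin.castAdd rB i', by rwa [Fin.append_left]⟩
          · exact fun e he => Set.mem_iUnion.mpr ⟨Fin.natAdd rA i', by rwa [Fin.append_right]⟩
      rw [hsplit, ← hcover, ← hA5, ← hB5]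
      ext e
      simp only [Set.mem_union]
      tauto
    · -- vertex count
      rw [Fin.sum_univ_add]
      simp only [Fin.append_left, Fin.append_right]
      rw [hmAR] at hA6
      rw [hmBR] at hB6
      exact aux_R2 (m:ℝ) u νn La Lb L _ _ hL hu1R (by positivity) hν' hLa hLa0 hLb hLb0
        (by linarith) hA6 hB6
    · -- expanders
      intro i
      rcases fin_cases_add i with ⟨i', rfl⟩ | ⟨i', rfl⟩
      · rw [Fin.append_left]; exact hA7 i'
      · rw [Fin.append_right]; exact hB7 i'

/-- Any `n`-vertex graph `G` can, after deleting at most `4sn·log n` edges, have its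
remaining edges partitioned into subgraphs `G₁,…,G_r` with `Σ|V(Gᵢ)| ≤ 2n`, each an
`(ε,s)`-expander. -/
theorem almost_decomposition_into_expanders
    (n : ℕ) (V : Type) [Fintype V] (G : SimpleGraph V) (hn : Nat.card V = n)
    (s : ℕ) (ε : ℝ) (hε : ε ≤ (2 : ℝ) ^ (-5 : ℤ)) :
    ∃ (D : Set (Sym2 V)) (r : ℕ) (H : Fin r → G.Subgraph),
      D ⊆ G.edgeSet ∧
      (D.ncard : ℝ) ≤ 4 * s * n * Real.logb 2 n ∧
      (∀ i j, i ≠ j → Disjoint (H i).edgeSet (H j).edgeSet) ∧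
      (∀ i, Disjoint (H i).edgeSet D) ∧
      ((⋃ i, (H i).edgeSet) ∪ D = G.edgeSet) ∧
      (∑ i, (H i).verts.ncard) ≤ 2 * n ∧
      (∀ i, IsExpander (H i).coe ε s) := by
  have htop : (⊤ : G.Subgraph).verts.ncard = n := by
    rw [SimpleGraph.Subgraph.verts_top, Set.ncard_univ, hn]
  obtain ⟨D, r, H, h1, h2, h3, h4, h5, h6, h7⟩ := decomp G s ε hε n ⊤ htop
  refine ⟨D, r, H, ?_, h2, h3, h4, ?_, ?_, h7⟩
  · simpa [SimpleGraph.Subgraph.edgeSet_top] using h1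
  · simpa [SimpleGraph.Subgraph.edgeSet_top] using h5
  · have hnn : (0:ℝ) ≤ (n:ℝ)/(Real.logb 2 n + 1) := by
      rcases Nat.eq_zero_or_pos n with h | h
      · simp [h]
      · have : (0:ℝ) ≤ Real.logb 2 n :=
          Real.logb_nonneg (by norm_num) (by exact_mod_cast h)
        positivity
    have : ((∑ i, (H i).verts.ncard : ℕ) : ℝ) ≤ (2*n : ℕ) := by
      push_cast
      linarith
    exact_mod_cast this
end

section
/- Let n, k, s be positive integers and 0 < ε ≤ 1. Suppose G is an n-vertex (ε,s)-expander and s ≥ 2^{12}·ε^{-1}·k²·(log n)^4. Then there are edge disjoint graphs G₁, …, G_k, each with vertex set V(G), such that E(G) = ⋃_{i∈[k]} E(G_i) and each G_i is an (ε/4, √(sε)/(8k·log n))-expander. -/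
set_option maxHeartbeats 4000000

open Finset
open scoped Classical

noncomputable section



lemma sqrt_mul_le_self' {s ε : ℝ} (hs : 1 ≤ s) (hε0 : 0 ≤ ε) (hε1 : ε ≤ 1) :
    Real.sqrt (s * ε) ≤ s := by
  have h : s * ε ≤ s ^ 2 := by nlinarith
  calc Real.sqrt (s * ε) ≤ Real.sqrt (s ^ 2) := Real.sqrt_le_sqrt h
    _ = s := Real.sqrt_sq (by linarith)

lemma expander_mono {V : Type} {G : SimpleGraph V} {ε s ε' s' : ℝ}
    (h : IsExpander G ε s) (hε' : 0 ≤ ε') (he : ε' ≤ ε) (hs : s' ≤ s) :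
    IsExpander G ε' s' := by
  intro U F hF h1 h2 hFc
  have h3 : (F.ncard : ℝ) ≤ s * U.ncard :=
    le_trans hFc (mul_le_mul_of_nonneg_right hs (Nat.cast_nonneg _))
  refine le_trans ?_ (h U F hF h1 h2 h3)
  rw [div_eq_mul_inv, div_eq_mul_inv]
  exact mul_le_mul_of_nonneg_right
    (mul_le_mul_of_nonneg_right he (Nat.cast_nonneg _))
    (inv_nonneg.mpr (sq_nonneg _))

lemma one_sub_inv_le_rpow {k : ℕ} (hk : 2 ≤ k) :
    (1 - 1 / (k : ℝ)) ≤ (2 : ℝ) ^ (-(1 : ℝ) / k) := by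
  have hk1 : (1:ℝ) ≤ (k:ℝ) - 1 := by
    have : (2:ℝ) ≤ k := by exact_mod_cast hk
    linarith
  have hkpos : (0:ℝ) < k := by positivity
  set a : ℝ := 1 - 1 / (k:ℝ) with ha
  have ha0 : 0 < a := by
    rw [ha, sub_pos, div_lt_one hkpos]; linarith
  have ha1 : a < 1 := by
    rw [ha]; have : 0 < 1 / (k:ℝ) := by positivity
    linarith
  -- (1/a)^k ≥ 2 via Bernoulli
  have hinv : (1:ℝ)/a = 1 + 1/((k:ℝ)-1) := by
    rw [ha]; field_simp; ring
  have hber : (2:ℝ) ≤ ((1:ℝ)/a) ^ k := by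
    rw [hinv]
    have hx : (0:ℝ) ≤ 1/((k:ℝ)-1) := by positivity
    have := one_add_mul_le_pow (a := 1/((k:ℝ)-1)) (by linarith) k
    have hkx : (1:ℝ) ≤ (k:ℝ) * (1/((k:ℝ)-1)) := by
      rw [mul_one_div, le_div_iff₀ (by linarith)]; linarith
    linarith
  have hak : a ^ k ≤ 1/2 := by
    have h2 : (0:ℝ) < ((1:ℝ)/a)^k := by positivity
    have hmul : a ^ k * ((1/a)^k) = 1 := by
      rw [← mul_pow]; field_simp; exact one_pow k
    nlinarith [pow_pos ha0 k]
  -- take k-th root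
  have h1k : (0:ℝ) ≤ 1/(k:ℝ) := by positivity
  have : a = (a ^ k) ^ ((1:ℝ)/k) := by
    rw [← Real.rpow_natCast a k, ← Real.rpow_mul ha0.le]
    rw [mul_one_div, div_self (ne_of_gt hkpos), Real.rpow_one]
  rw [this]
  have h12 : (a ^ k) ^ ((1:ℝ)/k) ≤ ((1:ℝ)/2) ^ ((1:ℝ)/k) :=
    Real.rpow_le_rpow (by positivity) hak h1k
  refine le_trans h12 (le_of_eq ?_)
  rw [one_div, ← Real.rpow_neg_one (2:ℝ), ← Real.rpow_mul (by norm_num)]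
  ring_nf


lemma chain_le (f : ℕ → ℕ) : ∀ (t : ℕ), (∀ j < t, f j ≤ f (j+1)) → ∀ j ≤ t, f j ≤ f t := by
  intro t
  induction t with
  | zero => intro _ j hj; have : j = 0 := Nat.le_zero.mp hj; subst this; exact le_rfl
  | succ t ih =>
    intro h j hj
    rcases Nat.lt_or_ge j (t+1) with h' | h'
    swap
    · have : j = t + 1 := by omega
      subst this; exact le_rfl
    · exact le_trans (ih (fun j hj => h j (by omega)) j (by omega)) (h t (by omega))

lemma term_mono {m k t : ℕ} (hk : 2 ≤ k) (hmk : (t+1) * k ≤ m) :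
    ∀ j ≤ t, m.choose j * (k-1)^(m-j) ≤ m.choose t * (k-1)^(m-t) := by
  apply chain_le (fun j => m.choose j * (k-1)^(m-j)) t
  intro j hj
  have hjk : (j+1) * k ≤ m := le_trans (Nat.mul_le_mul_right k (by omega)) hmk
  have hj1m : j + 1 ≤ m := le_trans (Nat.le_mul_of_pos_right _ (by omega)) hjk
  have e1 : (k-1)*(j+1) = k*(j+1) - (j+1) := by rw [Nat.sub_mul, one_mul]
  have hjk' : k*(j+1) ≤ m := by rw [mul_comm]; exact hjk
  have hstep : m.choose j * (k-1) ≤ m.choose (j+1) := by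
    have key : m.choose j * (k-1) * (j+1) ≤ m.choose (j+1) * (j+1) := by
      rw [Nat.choose_succ_right_eq]
      calc m.choose j * (k-1) * (j+1) = m.choose j * ((k-1)*(j+1)) := by ring
        _ ≤ m.choose j * (m - j) := Nat.mul_le_mul_left _ (by omega)
    exact Nat.le_of_mul_le_mul_right key (by omega)
  have hmj : m - j = (m - (j+1)) + 1 := by omega
  calc m.choose j * (k-1)^(m-j) = (m.choose j * (k-1)) * (k-1)^(m-(j+1)) := by
        rw [hmj, pow_succ]; ring
    _ ≤ m.choose (j+1) * (k-1)^(m-(j+1)) := Nat.mul_le_mul_right _ hstep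

lemma badSet_card_le {D : Type} [Fintype D] [DecidableEq D] {k : ℕ} (hk : 2 ≤ k) (i : Fin k)
    (T : Finset D) {t : ℕ} (hmk : (t+1) * k ≤ T.card) :
    ((Finset.univ.filter
        (fun c : D → Fin k => (T.filter (fun e => c e = i)).card ≤ t)).card : ℕ)
      ≤ (t + 1) * T.card ^ t * ((k-1) ^ (T.card - t) * k ^ (Fintype.card D - T.card)) := by
  set m := T.card with hm
  set A : Finset D → D → Finset (Fin k) := fun S e =>
    if e ∈ S then {i} else if e ∈ T then Finset.univ.erase i else Finset.univ with hA
  have hsub : (Finset.univ.filter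
        (fun c : D → Fin k => (T.filter (fun e => c e = i)).card ≤ t)) ⊆
      (T.powerset.filter (fun S => S.card ≤ t)).biUnion
        (fun S => Fintype.piFinset (A S)) := by
    intro c hc
    simp only [mem_filter, mem_univ, true_and] at hc
    rw [mem_biUnion]
    refine ⟨T.filter (fun e => c e = i), ?_, ?_⟩
    · simp only [mem_filter, mem_powerset]
      exact ⟨Finset.filter_subset _ _, hc⟩
    · rw [Fintype.mem_piFinset]
      intro e
      by_cases heS : e ∈ T.filter (fun e => c e = i)
      · simp only [hA, heS, if_pos]
        simp only [mem_filter] at heS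
        simp [heS.2]
      · by_cases heT : e ∈ T
        · have hne : c e ≠ i := fun h => heS (by simp [mem_filter, heT, h])
          simp [hA, heS, heT, hne]
        · have heS' : e ∉ T.filter (fun e => c e = i) := heS
          simp [hA, heS', heT]
  have hcardpi : ∀ S ∈ T.powerset.filter (fun S => S.card ≤ t),
      (Fintype.piFinset (A S)).card = (k-1) ^ (m - S.card) * k ^ (Fintype.card D - m) := by
    intro S hS
    simp only [mem_filter, mem_powerset] at hS
    obtain ⟨hST, _⟩ := hS
    rw [Fintype.card_piFinset]
    rw [← Finset.prod_mul_prod_compl T]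
    have h1 : ∏ e ∈ T, (A S e).card = (k-1) ^ (m - S.card) := by
      rw [← Finset.prod_sdiff hST]
      have hS1 : ∏ e ∈ S, (A S e).card = 1 := by
        apply Finset.prod_eq_one
        intro e he; simp [hA, he]
      have hcongr : ∀ e ∈ T \ S, (A S e).card = k - 1 := by
        intro e he
        simp only [mem_sdiff] at he
        simp only [hA, he.1, he.2, if_false, if_true, if_neg, if_pos]
        rw [Finset.card_erase_of_mem (mem_univ _), Finset.card_univ, Fintype.card_fin]
      rw [Finset.prod_congr rfl hcongr, Finset.prod_const, Finset.card_sdiff_of_subset hST, hS1, mul_one]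
    have h2 : ∏ e ∈ Tᶜ, (A S e).card = k ^ (Fintype.card D - m) := by
      have hcongr : ∀ e ∈ Tᶜ, (A S e).card = k := by
        intro e he
        simp only [Finset.mem_compl] at he
        have heS : e ∉ S := fun h => he (hST h)
        simp [hA, heS, he]
      rw [Finset.prod_congr rfl hcongr, Finset.prod_const, Finset.card_compl]
    rw [h1, h2]
  have hsplit : T.powerset.filter (fun S => S.card ≤ t)
      = (Finset.range (t+1)).biUnion (fun j => Finset.powersetCard j T) := by
    ext S
    simp only [mem_filter, mem_powerset, mem_biUnion, Finset.mem_range,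
      Finset.mem_powersetCard, Nat.lt_succ_iff]
    constructor
    · rintro ⟨h1, h2⟩; exact ⟨S.card, h2, h1, rfl⟩
    · rintro ⟨j, hj, h1, rfl⟩; exact ⟨h1, hj⟩
  have hdisj : ∀ a ∈ Finset.range (t+1), ∀ b ∈ Finset.range (t+1), a ≠ b →
      Disjoint (Finset.powersetCard a T) (Finset.powersetCard b T) := by
    intro a _ b _ hab
    rw [Finset.disjoint_left]
    intro S hSa hSb
    rw [Finset.mem_powersetCard] at hSa hSb
    exact hab (hSa.2 ▸ hSb.2)
  calc (Finset.univ.filter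
        (fun c : D → Fin k => (T.filter (fun e => c e = i)).card ≤ t)).card
      ≤ ∑ S ∈ T.powerset.filter (fun S => S.card ≤ t), (Fintype.piFinset (A S)).card :=
        le_trans (Finset.card_le_card hsub) Finset.card_biUnion_le
    _ = ∑ S ∈ T.powerset.filter (fun S => S.card ≤ t),
          (k-1) ^ (m - S.card) * k ^ (Fintype.card D - m) :=
        Finset.sum_congr rfl hcardpi
    _ = ∑ j ∈ Finset.range (t+1), ∑ S ∈ Finset.powersetCard j T,
          (k-1) ^ (m - S.card) * k ^ (Fintype.card D - m) := by
        rw [hsplit, Finset.sum_biUnion]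
        exact fun a ha b hb hab => hdisj a ha b hb hab
    _ = ∑ j ∈ Finset.range (t+1), m.choose j * (k-1) ^ (m - j) * k ^ (Fintype.card D - m) := by
        refine Finset.sum_congr rfl (fun j _ => ?_)
        have : ∀ S ∈ Finset.powersetCard j T,
            (k-1) ^ (m - S.card) * k ^ (Fintype.card D - m)
              = (k-1) ^ (m - j) * k ^ (Fintype.card D - m) := by
          intro S hS
          rw [Finset.mem_powersetCard] at hS
          rw [hS.2]
        rw [Finset.sum_congr rfl this, Finset.sum_const, Finset.card_powersetCard, smul_eq_mul, mul_assoc]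
    _ ≤ ∑ j ∈ Finset.range (t+1), m.choose t * (k-1) ^ (m - t) * k ^ (Fintype.card D - m) := by
        refine Finset.sum_le_sum (fun j hj => ?_)
        refine Nat.mul_le_mul_right _ ?_
        exact term_mono hk hmk j (by simpa [Nat.lt_succ_iff] using hj)
    _ = (t+1) * (m.choose t * (k-1) ^ (m - t) * k ^ (Fintype.card D - m)) := by
        rw [Finset.sum_const, Finset.card_range, smul_eq_mul]
    _ ≤ (t + 1) * m ^ t * ((k-1) ^ (m - t) * k ^ (Fintype.card D - m)) := by
        have hc : m.choose t ≤ m ^ t :=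
          le_trans (Nat.choose_le_descFactorial _ _) (Nat.descFactorial_le_pow _ _)
        calc (t+1) * (m.choose t * (k-1) ^ (m - t) * k ^ (Fintype.card D - m))
            ≤ (t+1) * (m ^ t * (k-1) ^ (m - t) * k ^ (Fintype.card D - m)) :=
              Nat.mul_le_mul_left _ (Nat.mul_le_mul_right _ (Nat.mul_le_mul_right _ hc))
          _ = (t + 1) * m ^ t * ((k-1) ^ (m - t) * k ^ (Fintype.card D - m)) := by ring


lemma card_small_subsets {α : Type} (T : Finset α) (hT : 1 ≤ T.card) (t : ℕ) :
    (T.powerset.filter (fun S => S.card ≤ t)).card ≤ (t + 1) * T.card ^ t := by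
  have hsub : T.powerset.filter (fun S => S.card ≤ t) ⊆
      (Finset.range (t+1)).biUnion (fun j => Finset.powersetCard j T) := by
    intro S hS
    simp only [mem_filter, mem_powerset] at hS
    rw [mem_biUnion]
    exact ⟨S.card, by simp [Nat.lt_succ_iff, hS.2], by
      rw [Finset.mem_powersetCard]; exact ⟨hS.1, rfl⟩⟩
  calc (T.powerset.filter (fun S => S.card ≤ t)).card
      ≤ ((Finset.range (t+1)).biUnion (fun j => Finset.powersetCard j T)).card :=
        Finset.card_le_card hsub
    _ ≤ ∑ j ∈ Finset.range (t+1), (Finset.powersetCard j T).card :=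
        Finset.card_biUnion_le
    _ ≤ ∑ j ∈ Finset.range (t+1), T.card ^ t := by
        refine Finset.sum_le_sum (fun j hj => ?_)
        rw [Finset.card_powersetCard]
        calc T.card.choose j ≤ T.card.descFactorial j := Nat.choose_le_descFactorial _ _
          _ ≤ T.card ^ j := Nat.descFactorial_le_pow _ _
          _ ≤ T.card ^ t := Nat.pow_le_pow_right hT (by simpa [Nat.lt_succ_iff] using hj)
    _ = (t + 1) * T.card ^ t := by rw [Finset.sum_const, Finset.card_range, smul_eq_mul]

/-- The Finset of edges of `G` leaving `U` and landing outside `U ∪ W`. -/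
noncomputable def leaveEdges {V : Type} [Fintype V] (G : SimpleGraph V) (U W : Finset V) :
    Finset (Sym2 V) :=
  G.edgeFinset.filter (fun e => ∃ x ∈ U, ∃ y, y ∉ U ∧ y ∉ W ∧ e = s(x,y))

lemma many_leaving_edges {V : Type} [Fintype V] (G : SimpleGraph V) {ε sR : ℝ}
    (hG : IsExpander G ε sR) (U W : Finset V)
    (hU1 : 1 ≤ U.card) (hU2 : (U.card : ℝ) ≤ 2/3 * (Nat.card V : ℝ))
    (hW : (W.card : ℝ) < ε * U.card / (Real.logb 2 (Nat.card V : ℝ))^2) :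
    sR * U.card < ((leaveEdges G U W).card : ℝ) := by
  by_contra hcon
  push_neg at hcon
  have hF : (↑(leaveEdges G U W) : Set (Sym2 V)) ⊆ G.edgeSet := by
    intro e he
    simp only [Finset.coe_filter, Set.mem_setOf_eq, leaveEdges] at he
    exact (SimpleGraph.mem_edgeFinset).mp he.1
  have h1 : 1 ≤ (↑U : Set V).ncard := by rwa [Set.ncard_coe_finset]
  have h2 : ((↑U : Set V).ncard : ℝ) ≤ 2/3 * (Nat.card V : ℝ) := by
    rwa [Set.ncard_coe_finset]
  have h3 : ((↑(leaveEdges G U W) : Set (Sym2 V)).ncard : ℝ)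
      ≤ sR * ((↑U : Set V).ncard : ℝ) := by
    rw [Set.ncard_coe_finset, Set.ncard_coe_finset]; exact hcon
  have hkey := hG (↑U) (↑(leaveEdges G U W)) hF h1 h2 h3
  rw [Set.ncard_coe_finset] at hkey
  have hsub : nbhdOutside (G.deleteEdges (↑(leaveEdges G U W))) (↑U) ⊆ (↑W : Set V) := by
    rintro v ⟨hvU, x, hxU, hadj⟩
    rw [SimpleGraph.deleteEdges_adj] at hadj
    by_contra hvW
    apply hadj.2
    simp only [Finset.mem_coe, leaveEdges, Finset.mem_filter]
    refine ⟨SimpleGraph.mem_edgeFinset.mpr ?_, x, hxU, v, hvU, hvW, ?_⟩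
    · rw [Sym2.eq_swap, SimpleGraph.mem_edgeSet]; exact hadj.1.symm
    · rw [Sym2.eq_swap]
  have hle : ((nbhdOutside (G.deleteEdges (↑(leaveEdges G U W))) (↑U)).ncard : ℝ)
      ≤ (W.card : ℝ) := by
    have := Set.ncard_le_ncard hsub (Set.toFinite _)
    rw [Set.ncard_coe_finset] at this
    exact_mod_cast this
  linarith


lemma bad_real_bound (n k m t N : ℕ) (S u : ℝ) (hk : 2 ≤ k) (htm : t ≤ m) (hmN : m ≤ N)
    (hmn : m ≤ n^2) (htn : t + 1 ≤ n^2) (hS : 0 ≤ S) (hu : 0 ≤ u)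
    (hsu2 : S*u/2 ≤ (m:ℝ) - t) :
    (((t+1) * m^t * ((k-1)^(m-t) * k^(N-m)) : ℕ) : ℝ)
      ≤ (k:ℝ)^N * ((n:ℝ)^(2*t+2) * (2:ℝ)^(-(S*u)/(2*(k:ℝ)))) := by
  have hk0 : (0:ℝ) < k := by positivity
  have hk1 : (1:ℕ) ≤ k := by omega
  have hkm1 : ((k-1 : ℕ) : ℝ) = (k:ℝ) * (1 - 1/(k:ℝ)) := by
    rw [Nat.cast_sub hk1]; field_simp; norm_num
  have hcast : (((t+1) * m^t * ((k-1)^(m-t) * k^(N-m)) : ℕ) : ℝ)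
      = ((t:ℝ)+1) * (m:ℝ)^t * (((k-1:ℕ):ℝ)^(m-t) * (k:ℝ)^(N-m)) := by push_cast; ring
  rw [hcast, hkm1, mul_pow]
  have hexp : (k:ℝ)^(m-t) * (k:ℝ)^(N-m) = (k:ℝ)^(N-t) := by
    rw [← pow_add]; congr 1; omega
  have hone : (0:ℝ) ≤ 1 - 1/(k:ℝ) := by
    rw [sub_nonneg, div_le_one hk0]; exact_mod_cast hk1
  have hmt_cast : ((m - t : ℕ) : ℝ) = (m:ℝ) - t := by
    rw [Nat.cast_sub htm]
  have hb1 : (1 - 1/(k:ℝ))^(m-t) ≤ (2:ℝ)^(-(S*u)/(2*(k:ℝ))) := by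
    have hdd : S*u/(2*(k:ℝ)) ≤ ((m:ℝ)-t)/k := by
      rw [div_le_div_iff₀ (by positivity) hk0]; nlinarith
    calc (1 - 1/(k:ℝ))^(m-t) ≤ ((2:ℝ)^(-(1:ℝ)/k))^(m-t) :=
          pow_le_pow_left₀ hone (one_sub_inv_le_rpow hk) _
      _ = (2:ℝ)^((-(1:ℝ)/k) * (m-t : ℕ)) := by
          rw [← Real.rpow_natCast ((2:ℝ)^(-(1:ℝ)/k)) (m-t), ← Real.rpow_mul (by norm_num)]
      _ ≤ (2:ℝ)^(-(S*u)/(2*(k:ℝ))) := by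
          apply Real.rpow_le_rpow_of_exponent_le one_le_two
          rw [hmt_cast]
          have : (-(1:ℝ)/k) * ((m:ℝ) - t) = -(((m:ℝ)-t)/k) := by ring
          rw [this, neg_div]
          exact neg_le_neg hdd
  have hb2 : ((t:ℝ)+1) * (m:ℝ)^t ≤ (n:ℝ)^(2*t+2) := by
    have h1 : ((t:ℝ)+1) ≤ (n:ℝ)^2 := by exact_mod_cast htn
    have h2 : (m:ℝ)^t ≤ ((n:ℝ)^2)^t := by
      apply pow_le_pow_left₀ (by positivity)
      exact_mod_cast hmn
    calc ((t:ℝ)+1) * (m:ℝ)^t ≤ (n:ℝ)^2 * ((n:ℝ)^2)^t := by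
          apply mul_le_mul h1 h2 (by positivity) (by positivity)
      _ = (n:ℝ)^(2*t+2) := by rw [← pow_mul, ← pow_add]; ring_nf
  have hb3 : (k:ℝ)^(N-t) ≤ (k:ℝ)^N := by
    apply pow_le_pow_right₀ (by exact_mod_cast hk1)
    omega
  calc ((t:ℝ)+1) * (m:ℝ)^t * (((k:ℝ)^(m-t) * (1-1/(k:ℝ))^(m-t)) * (k:ℝ)^(N-m))
      = (((t:ℝ)+1) * (m:ℝ)^t) * ((1-1/(k:ℝ))^(m-t) * ((k:ℝ)^(m-t) * (k:ℝ)^(N-m))) := by ring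
    _ = (((t:ℝ)+1) * (m:ℝ)^t) * ((1-1/(k:ℝ))^(m-t) * (k:ℝ)^(N-t)) := by rw [hexp]
    _ ≤ ((n:ℝ)^(2*t+2)) * ((2:ℝ)^(-(S*u)/(2*(k:ℝ))) * (k:ℝ)^N) := by
        apply mul_le_mul hb2 _ (by positivity) (by positivity)
        apply mul_le_mul hb1 hb3 (by positivity) (by positivity)
    _ = (k:ℝ)^N * ((n:ℝ)^(2*t+2) * (2:ℝ)^(-(S*u)/(2*(k:ℝ)))) := by ring

lemma per_u_bound (n k s u t w : ℕ) (ε L : ℝ)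
    (hn : 2 ≤ n) (hk : 2 ≤ k) (hu1 : 1 ≤ u) (hun : u ≤ n)
    (hε0 : 0 < ε) (hε1 : ε ≤ 1) (hL : 1 ≤ L)
    (hLdef : (n:ℝ) = (2:ℝ)^L)
    (hsbig : 2^12 * ε⁻¹ * (k:ℝ)^2 * L^4 ≤ (s:ℝ))
    (ht : (t:ℝ) ≤ Real.sqrt ((s:ℝ)*ε)/(8*(k:ℝ)*L) * u)
    (hw : (w:ℝ) ≤ ε*u/(4*L^2)) :
    (k:ℝ) * (n:ℝ)^u * (((w:ℝ)+1) * (n:ℝ)^w) * ((n:ℝ)^(2*t+2) * (2:ℝ)^(-((s:ℝ)*(u:ℝ))/(2*(k:ℝ))))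
      ≤ (2:ℝ)^(-(u:ℝ)-1) := by
  have hk0 : (0:ℝ) < k := by positivity
  have hkR : (2:ℝ) ≤ k := by exact_mod_cast hk
  have hnR : (2:ℝ) ≤ n := by exact_mod_cast hn
  have huR : (1:ℝ) ≤ u := by exact_mod_cast hu1
  have hunR : (u:ℝ) ≤ n := by exact_mod_cast hun
  have hL2 : (1:ℝ) ≤ L^2 := by nlinarith
  have hL3 : (1:ℝ) ≤ L^3 := by nlinarith
  have hL4 : (1:ℝ) ≤ L^4 := by nlinarith
  have hεinv : (1:ℝ) ≤ ε⁻¹ := by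
    rw [← one_div]
    exact one_le_one_div hε0 hε1
  have hSbig : (2:ℝ)^12 * (k:ℝ)^2 * L^4 ≤ (s:ℝ) := by nlinarith
  have hS0 : (0:ℝ) ≤ (s:ℝ) := Nat.cast_nonneg _
  set S := (s:ℝ) with hSdef
  have hcore : (2:ℝ)^12 * (k:ℝ)^2 * L^4 * u ≤ S * u := by nlinarith
  have hL3u : (1:ℝ) ≤ L^3*(u:ℝ) := by
    nlinarith [mul_le_mul_of_nonneg_left huR (show (0:ℝ) ≤ L^3 by positivity)]
  have hL4u : (1:ℝ) ≤ L^4*(u:ℝ) := by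
    nlinarith [mul_le_mul_of_nonneg_left huR (show (0:ℝ) ≤ L^4 by positivity)]
  have hkk : (2:ℝ)*(k:ℝ) ≤ (k:ℝ)*(k:ℝ) := mul_le_mul_of_nonneg_right hkR hk0.le
  have hkL3 : (2:ℝ) ≤ (k:ℝ)*L^3 := by
    nlinarith [mul_le_mul_of_nonneg_left hL3 hk0.le]
  have hkL3u : (2:ℝ) ≤ (k:ℝ)*(L^3*(u:ℝ)) := by
    nlinarith [mul_le_mul_of_nonneg_left hL3u hk0.le]
  have hkL4u : (2:ℝ) ≤ (k:ℝ)*(L^4*(u:ℝ)) := by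
    nlinarith [mul_le_mul_of_nonneg_left hL4u hk0.le]
  have hkkL4 : (k:ℝ)*(k:ℝ) ≤ (k:ℝ)*(k:ℝ)*L^4 := by
    nlinarith [mul_le_mul_of_nonneg_left hL4 (mul_nonneg hk0.le hk0.le)]
  -- factors to powers of 2
  have fk : (k:ℝ) ≤ (2:ℝ)^((k:ℝ)) := by
    have h := (Nat.lt_two_pow_self (n := k)).le
    have h2 : (k:ℝ) ≤ ((2^k : ℕ) : ℝ) := by exact_mod_cast h
    rwa [Nat.cast_pow, Nat.cast_ofNat, ← Real.rpow_natCast (2:ℝ) k] at h2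
  have fpow : ∀ a : ℕ, (n:ℝ)^a = (2:ℝ)^(L * (a:ℝ)) := by
    intro a
    rw [hLdef, ← Real.rpow_natCast ((2:ℝ)^L) a, ← Real.rpow_mul (by norm_num)]
  have fw1 : ((w:ℝ)+1) ≤ (2:ℝ)^(L*2) := by
    have hw' : (w:ℝ)*(4*L^2) ≤ ε*u := (le_div_iff₀ (by positivity)).mp hw
    have hεu : ε*(u:ℝ) ≤ (u:ℝ) := by nlinarith
    have hself : (w:ℝ) ≤ (w:ℝ)*(4*L^2) := by
      nlinarith [mul_le_mul_of_nonneg_left (show (1:ℝ) ≤ 4*L^2 by nlinarith)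
        (show (0:ℝ) ≤ (w:ℝ) by positivity)]
    have hwu : (w:ℝ) ≤ u := by linarith
    have hn2 : ((w:ℝ)+1) ≤ (n:ℝ)^2 := by nlinarith [sq_nonneg ((n:ℝ)-1)]
    calc ((w:ℝ)+1) ≤ (n:ℝ)^2 := hn2
      _ = (2:ℝ)^(L*2) := by rw [fpow 2]; norm_num
  have main : (k:ℝ) * (n:ℝ)^u * (((w:ℝ)+1) * (n:ℝ)^w)
        * ((n:ℝ)^(2*t+2) * (2:ℝ)^(-(S*(u:ℝ))/(2*(k:ℝ))))
      ≤ (2:ℝ)^((k:ℝ) + L*(u:ℝ) + (L*2 + L*(w:ℝ))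
          + (L*((2*t+2 : ℕ):ℝ) + (-(S*(u:ℝ))/(2*(k:ℝ))))) := by
    rw [Real.rpow_add (by norm_num), Real.rpow_add (by norm_num), Real.rpow_add (by norm_num),
      Real.rpow_add (by norm_num), Real.rpow_add (by norm_num)]
    rw [fpow u, fpow w, fpow (2*t+2)]
    apply mul_le_mul _ _ (by positivity) (by positivity)
    · apply mul_le_mul _ _ (by positivity) (by positivity)
      · exact mul_le_mul fk le_rfl (by positivity) (by positivity)
      · exact mul_le_mul fw1 le_rfl (by positivity) (by positivity)
    · exact le_rfl
  refine le_trans main (Real.rpow_le_rpow_of_exponent_le one_le_two ?_)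
  -- exponent arithmetic: show total ≤ -u - 1
  have hQrel : S*(u:ℝ)/(2*(k:ℝ)) = 8*(S*(u:ℝ)/(16*(k:ℝ))) := by ring
  have e1 : (k:ℝ) ≤ S*(u:ℝ)/(16*(k:ℝ)) := by
    rw [le_div_iff₀ (by positivity)]
    linarith [mul_le_mul_of_nonneg_left (show (16:ℝ) ≤ 2^12*(L^4*(u:ℝ)) by linarith)
      (sq_nonneg (k:ℝ)), hcore]
  have e2 : L*(u:ℝ) ≤ S*(u:ℝ)/(16*(k:ℝ)) := by
    rw [le_div_iff₀ (by positivity)]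
    linarith [mul_le_mul_of_nonneg_left (show (16:ℝ) ≤ 2^12*((k:ℝ)*L^3) by linarith)
      (show (0:ℝ) ≤ (k:ℝ)*L*(u:ℝ) by positivity), hcore]
  have e3 : L*2 ≤ S*(u:ℝ)/(16*(k:ℝ)) := by
    rw [le_div_iff₀ (by positivity)]
    linarith [mul_le_mul_of_nonneg_left (show (32:ℝ) ≤ 2^12*((k:ℝ)*(L^3*(u:ℝ))) by linarith)
      (show (0:ℝ) ≤ (k:ℝ)*L by positivity), hcore]
  have hw' : (w:ℝ)*(4*L^2) ≤ ε*u := (le_div_iff₀ (by positivity)).mp hw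
  have hLw : L*(w:ℝ) ≤ (u:ℝ) := by
    have hεu : ε*(u:ℝ) ≤ 1*(u:ℝ) := mul_le_mul_of_nonneg_right hε1 (by positivity)
    linarith [mul_le_mul_of_nonneg_right hL (show (0:ℝ) ≤ L*(w:ℝ) by positivity), hw', hεu]
  have e7 : (u:ℝ) ≤ S*(u:ℝ)/(16*(k:ℝ)) := by
    rw [le_div_iff₀ (by positivity)]
    linarith [mul_le_mul_of_nonneg_left (show (16:ℝ)*(k:ℝ) ≤ 2^12*(k:ℝ)^2*L^4 by linarith [hkk, hkkL4])
      (show (0:ℝ) ≤ (u:ℝ) by positivity), hcore]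
  have e4 : L*(w:ℝ) ≤ S*(u:ℝ)/(16*(k:ℝ)) := le_trans hLw e7
  have hsqrt : Real.sqrt (S*ε) ≤ S/4 := by
    have hS16 : (16:ℝ) ≤ S := by linarith [hSbig, hkkL4, hkk]
    have h1 : S*ε ≤ (S/4)^2 := by
      linarith [mul_le_mul_of_nonneg_right hS16 (show (0:ℝ) ≤ S from hS0),
        mul_le_mul_of_nonneg_left hε1 (show (0:ℝ) ≤ S from hS0)]
    calc Real.sqrt (S*ε) ≤ Real.sqrt ((S/4)^2) := Real.sqrt_le_sqrt h1
      _ = S/4 := Real.sqrt_sq (by positivity)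
  have e5 : 2*L*(t:ℝ) ≤ S*(u:ℝ)/(16*(k:ℝ)) := by
    have h1 : 2*L*(t:ℝ) ≤ 2*L*(Real.sqrt (S*ε)/(8*(k:ℝ)*L) * u) := by
      apply mul_le_mul_of_nonneg_left ht (by positivity)
    have h2 : 2*L*(Real.sqrt (S*ε)/(8*(k:ℝ)*L) * u) = Real.sqrt (S*ε)*(u:ℝ)/(4*(k:ℝ)) := by
      field_simp
      ring
    have h3 : Real.sqrt (S*ε)*(u:ℝ)/(4*(k:ℝ)) ≤ (S/4)*(u:ℝ)/(4*(k:ℝ)) := by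
      apply (div_le_div_iff_of_pos_right (by positivity)).mpr
      exact mul_le_mul_of_nonneg_right hsqrt (by positivity)
    have h4 : (S/4)*(u:ℝ)/(4*(k:ℝ)) = S*(u:ℝ)/(16*(k:ℝ)) := by ring
    rw [h2] at h1
    rw [h4] at h3
    linarith [h1, h3]
  have e8 : (1:ℝ) ≤ S*(u:ℝ)/(16*(k:ℝ)) := by
    rw [le_div_iff₀ (by positivity)]
    linarith [mul_le_mul_of_nonneg_left (show (16:ℝ) ≤ 2^12*((k:ℝ)*(L^4*(u:ℝ))) by linarith)
      (show (0:ℝ) ≤ (k:ℝ) by positivity), hcore]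
  have hcast2 : ((2*t+2 : ℕ):ℝ) = 2*(t:ℝ)+2 := by push_cast; ring
  rw [hcast2]
  have expand : L*(2*(t:ℝ)+2) = 2*L*(t:ℝ) + L*2 := by ring
  rw [expand]
  have hneg : -(S*(u:ℝ))/(2*(k:ℝ)) = -(8*(S*(u:ℝ)/(16*(k:ℝ)))) := by ring
  rw [hneg]
  linarith [e1, e2, e3, e4, e5, e7, e8]


lemma thresh_arith (k s u : ℕ) (ε L t : ℝ) (hk : 2 ≤ k) (hu : (1:ℝ) ≤ u)
    (hε0 : 0 < ε) (hε1 : ε ≤ 1) (hL : 1 ≤ L)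
    (hsbig : 2^12 * ε⁻¹ * (k:ℝ)^2 * L^4 ≤ (s:ℝ))
    (ht : t ≤ Real.sqrt ((s:ℝ)*ε)/(8*(k:ℝ)*L) * u) (ht0 : 0 ≤ t) :
    (t+1)*(k:ℝ) ≤ (s:ℝ)*u ∧ t ≤ (s:ℝ)*u/2 := by
  have hk0 : (0:ℝ) < k := by positivity
  have hkR : (2:ℝ) ≤ k := by exact_mod_cast hk
  have hL2 : (1:ℝ) ≤ L^2 := by nlinarith
  have hL4 : (1:ℝ) ≤ L^4 := by nlinarith
  have hεinv : (1:ℝ) ≤ ε⁻¹ := by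
    rw [← one_div]; exact one_le_one_div hε0 hε1
  have hSbig : (2:ℝ)^12 * (k:ℝ)^2 * L^4 ≤ (s:ℝ) := by nlinarith
  have hkk : (2:ℝ)*(k:ℝ) ≤ (k:ℝ)*(k:ℝ) := mul_le_mul_of_nonneg_right hkR hk0.le
  have hkkL4 : (k:ℝ)*(k:ℝ) ≤ (k:ℝ)*(k:ℝ)*L^4 := by
    nlinarith [mul_le_mul_of_nonneg_left hL4 (mul_nonneg hk0.le hk0.le)]
  have hS0 : (0:ℝ) ≤ (s:ℝ) := Nat.cast_nonneg _
  have hS16 : (16:ℝ) ≤ (s:ℝ) := by linarith [hSbig, hkkL4, hkk]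
  have hsqrt : Real.sqrt ((s:ℝ)*ε) ≤ (s:ℝ)/4 := by
    have h1 : (s:ℝ)*ε ≤ ((s:ℝ)/4)^2 := by
      linarith [mul_le_mul_of_nonneg_right hS16 hS0,
        mul_le_mul_of_nonneg_left hε1 hS0]
    calc Real.sqrt ((s:ℝ)*ε) ≤ Real.sqrt (((s:ℝ)/4)^2) := Real.sqrt_le_sqrt h1
      _ = (s:ℝ)/4 := Real.sqrt_sq (by positivity)
  have hu0 : (0:ℝ) ≤ u := by linarith
  have htk : t*(k:ℝ) ≤ (s:ℝ)*u/32 := by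
    have h1 : t*(k:ℝ) ≤ (Real.sqrt ((s:ℝ)*ε)/(8*(k:ℝ)*L) * u)*(k:ℝ) :=
      mul_le_mul_of_nonneg_right ht hk0.le
    have h2 : (Real.sqrt ((s:ℝ)*ε)/(8*(k:ℝ)*L) * u)*(k:ℝ) = Real.sqrt ((s:ℝ)*ε)*u/(8*L) := by
      field_simp
    have h3 : Real.sqrt ((s:ℝ)*ε)*u/(8*L) ≤ ((s:ℝ)/4)*u/(8*L) := by
      apply (div_le_div_iff_of_pos_right (by positivity)).mpr
      exact mul_le_mul_of_nonneg_right hsqrt hu0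
    have h4 : ((s:ℝ)/4)*u/(8*L) ≤ ((s:ℝ)/4)*u/8 := by
      apply div_le_div_of_nonneg_left (by positivity) (by norm_num) (by linarith)
    rw [h2] at h1
    linarith
  have hks : (k:ℝ) ≤ (s:ℝ)*u/2 := by
    have h1 : (k:ℝ) ≤ (s:ℝ)/2 := by linarith [hSbig, hkkL4, hkk]
    have h2 : (s:ℝ)/2 ≤ (s:ℝ)*u/2 := by
      apply (div_le_div_iff_of_pos_right (by norm_num)).mpr
      nlinarith
    linarith
  constructor
  · have : t*(k:ℝ) + (k:ℝ) ≤ (s:ℝ)*u/32 + (s:ℝ)*u/2 := by linarith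
    have h5 : (s:ℝ)*u/32 + (s:ℝ)*u/2 ≤ (s:ℝ)*u := by
      have : (0:ℝ) ≤ (s:ℝ)*u := by positivity
      linarith
    nlinarith
  · nlinarith [htk, hk0, hkR, mul_le_mul_of_nonneg_left hkR ht0]

lemma exists_good_coloring {V : Type} [Fintype V] (G : SimpleGraph V) (n k s : ℕ)
    (hn : 2 ≤ n) (hk : 2 ≤ k)
    (ε : ℝ) (hε0 : 0 < ε) (hε1 : ε ≤ 1) (hcard : Nat.card V = n)
    (hG : IsExpander G ε s)
    (hsbig : 2 ^ 12 * ε⁻¹ * (k : ℝ) ^ 2 * (Real.logb 2 n) ^ 4 ≤ (s : ℝ)) :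
    ∃ c : Sym2 V → Fin k, ∀ (i : Fin k) (U W : Finset V),
      1 ≤ U.card → (U.card : ℝ) ≤ 2/3 * n →
      (W.card : ℝ) ≤ ε * U.card / (4 * (Real.logb 2 n)^2) →
      Real.sqrt ((s:ℝ) * ε) / (8 * k * Real.logb 2 n) * U.card
        < (((leaveEdges G U W).filter (fun e => c e = i)).card : ℝ) := by
  have hnR : (2:ℝ) ≤ n := by exact_mod_cast hn
  set L := Real.logb 2 (n:ℝ) with hLdef0
  have hn0 : (0:ℝ) < n := by linarith
  have hL : 1 ≤ L := by
    rw [hLdef0]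
    rw [Real.le_logb_iff_rpow_le one_lt_two hn0]
    rw [Real.rpow_one]; exact hnR
  have hLpow : (n:ℝ) = (2:ℝ)^L := by
    rw [hLdef0, Real.rpow_logb (by norm_num) (by norm_num) hn0]
  set s' := Real.sqrt ((s:ℝ)*ε)/(8*(k:ℝ)*L) with hs'def
  have hs'0 : 0 ≤ s' := by positivity
  have hfc : Fintype.card V = n := by rw [← Nat.card_eq_fintype_card, hcard]
  set N := Fintype.card (Sym2 V) with hNdef
  have hcardΩ : Fintype.card (Sym2 V → Fin k) = k ^ N := by
    rw [Fintype.card_fun, Fintype.card_fin]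
  have hNn : N ≤ n^2 := by
    have h := Sym2.card (α := V)
    rw [hfc] at h
    rw [hNdef, h, Nat.choose_two_right]
    have h1 : (n+1) - 1 = n := by omega
    rw [h1]
    have h2 : (n+1)*n ≤ 2*n^2 := by nlinarith
    exact Nat.div_le_of_le_mul h2
  -- thresholds
  set tU : ℕ → ℕ := fun u => ⌊s' * u⌋₊ with htUdef
  set wB : ℕ → ℕ := fun u => ⌊ε * u/(4*L^2)⌋₊ with hwBdef
  set Bad : Fin k → Finset V → Finset V → Finset (Sym2 V → Fin k) := fun i U W =>
    Finset.univ.filter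
      (fun c => ((leaveEdges G U W).filter (fun e => c e = i)).card ≤ tU U.card)
    with hBaddef
  set validU : Finset (Finset V) :=
    Finset.univ.filter (fun U => 1 ≤ U.card ∧ (U.card:ℝ) ≤ 2/3*n) with hvalidUdef
  set WS : Finset V → Finset (Finset V) :=
    (fun U => Finset.univ.filter (fun W => W.card ≤ wB U.card)) with hWSdef
  set BadAll : Finset (Sym2 V → Fin k) :=
    Finset.univ.biUnion
      (fun i => validU.biUnion (fun U => (WS U).biUnion (fun W => Bad i U W)))
    with hBadAlldef
  -- per-pair bound
  have key : ∀ (i : Fin k), ∀ U ∈ validU, ∀ W ∈ WS U,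
      ((Bad i U W).card : ℝ)
        ≤ (k:ℝ)^N * ((n:ℝ)^(2*(tU U.card)+2)
            * (2:ℝ)^(-((s:ℝ)*(U.card:ℝ))/(2*(k:ℝ)))) := by
    intro i U hUv W hWv
    rw [hvalidUdef, Finset.mem_filter] at hUv
    obtain ⟨-, hU1, hU2⟩ := hUv
    rw [hWSdef, Finset.mem_filter] at hWv
    obtain ⟨-, hWle⟩ := hWv
    have huR : (1:ℝ) ≤ U.card := by exact_mod_cast hU1
    have hu0 : (0:ℝ) < ε * U.card / L^2 := div_pos (mul_pos hε0 (by linarith)) (pow_pos (by linarith) 2)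
    have hWlt : (W.card : ℝ) < ε * U.card / (Real.logb 2 (Nat.card V : ℝ))^2 := by
      rw [hcard, ← hLdef0]
      calc (W.card : ℝ) ≤ (wB U.card : ℕ) := by exact_mod_cast hWle
        _ ≤ ε * U.card/(4*L^2) := by rw [hwBdef]; exact Nat.floor_le (div_nonneg (mul_nonneg hε0.le (Nat.cast_nonneg _)) (by positivity))
        _ < ε * U.card/L^2 := by
            have hpos : (0:ℝ) < ε*(U.card:ℝ)*L^2 := mul_pos (mul_pos hε0 (by linarith)) (pow_pos (by linarith) 2)
            rw [div_lt_div_iff₀ (by positivity) (by positivity)]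
            nlinarith [hpos]
    have hm := many_leaving_edges G hG U W hU1 (by rw [hcard]; exact hU2) hWlt
    set m := (leaveEdges G U W).card with hmdef
    set t := tU U.card with htdef
    have htle : (t:ℝ) ≤ s' * U.card := by
      rw [htdef, htUdef]; exact Nat.floor_le (mul_nonneg hs'0 (Nat.cast_nonneg _))
    have harith := thresh_arith k s U.card ε L (t:ℝ) hk huR hε0 hε1 hL
      (by rw [hLdef0] at hsbig ⊢; exact_mod_cast hsbig)
      (by rw [hs'def] at htle; exact htle) (by positivity)
    obtain ⟨ha1, ha2⟩ := harith
    have hsu0 : (0:ℝ) ≤ (s:ℝ)*U.card := mul_nonneg (Nat.cast_nonneg _) (Nat.cast_nonneg _)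
    have hmgt : (s:ℝ)*U.card < m := hm
    have htm : t ≤ m := by
      have : (t:ℝ) < m := by linarith
      exact_mod_cast this.le
    have hmk : (t+1) * k ≤ m := by
      have : ((t+1)*k : ℝ) < m := by push_cast; nlinarith
      exact_mod_cast this.le
    have hmN : m ≤ N := by
      rw [hmdef, hNdef]; exact Finset.card_le_univ _
    have hmn2 : m ≤ n^2 := le_trans hmN hNn
    have htltm : t < m := by
      have : (t:ℝ) < m := by linarith
      exact_mod_cast this
    have htn2 : t + 1 ≤ n^2 := by omega
    have hsu2 : (s:ℝ)*U.card/2 ≤ (m:ℝ) - t := by linarith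
    have hbound := badSet_card_le hk i (leaveEdges G U W) hmk
    have hreal := bad_real_bound n k m t N ((s:ℝ)) ((U.card:ℝ)) hk htm hmN hmn2 htn2
      (by positivity) (Nat.cast_nonneg _) hsu2
    calc ((Bad i U W).card : ℝ)
        ≤ (((t+1) * m^t * ((k-1)^(m-t) * k^(N-m)) : ℕ) : ℝ) := by
          have h' : (Bad i U W).card ≤ (t+1) * m^t * ((k-1)^(m-t) * k^(N-m)) := by
            simp only [hBaddef]
            simp only [← htdef]
            rw [hmdef, hNdef]
            exact hbound
          exact_mod_cast h'
      _ ≤ (k:ℝ)^N * ((n:ℝ)^(2*t+2) * (2:ℝ)^(-((s:ℝ)*(U.card:ℝ))/(2*(k:ℝ)))) := hreal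
  -- sum over W for fixed U
  have keyW : ∀ (i : Fin k), ∀ U ∈ validU,
      (∑ W ∈ WS U, ((Bad i U W).card : ℝ))
        ≤ (((wB U.card : ℕ):ℝ)+1) * (n:ℝ)^(wB U.card)
          * ((k:ℝ)^N * ((n:ℝ)^(2*(tU U.card)+2)
            * (2:ℝ)^(-((s:ℝ)*(U.card:ℝ))/(2*(k:ℝ))))) := by
    intro i U hUv
    have hWScard : ((WS U).card : ℝ) ≤ (((wB U.card : ℕ):ℝ)+1) * (n:ℝ)^(wB U.card) := by
      have h1 : (WS U).card ≤ (wB U.card + 1) * n^(wB U.card) := by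
        simp only [hWSdef]
        have heq : (Finset.univ.filter (fun W : Finset V => W.card ≤ wB U.card))
            = (Finset.univ : Finset V).powerset.filter (fun W => W.card ≤ wB U.card) := by
          rw [Finset.powerset_univ]
        rw [heq]
        have := card_small_subsets (Finset.univ : Finset V) (by rw [Finset.card_univ, hfc]; omega) (wB U.card)
        rwa [Finset.card_univ, hfc] at this
      calc ((WS U).card : ℝ) ≤ (((wB U.card + 1) * n^(wB U.card) : ℕ) : ℝ) := by exact_mod_cast h1
        _ = (((wB U.card : ℕ):ℝ)+1) * (n:ℝ)^(wB U.card) := by push_cast; ring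
    calc (∑ W ∈ WS U, ((Bad i U W).card : ℝ))
        ≤ ∑ W ∈ WS U, (k:ℝ)^N * ((n:ℝ)^(2*(tU U.card)+2)
            * (2:ℝ)^(-((s:ℝ)*(U.card:ℝ))/(2*(k:ℝ)))) :=
          Finset.sum_le_sum (fun W hW => key i U hUv W hW)
      _ = ((WS U).card : ℝ) * ((k:ℝ)^N * ((n:ℝ)^(2*(tU U.card)+2)
            * (2:ℝ)^(-((s:ℝ)*(U.card:ℝ))/(2*(k:ℝ))))) := by
          rw [Finset.sum_const, nsmul_eq_mul]
      _ ≤ (((wB U.card : ℕ):ℝ)+1) * (n:ℝ)^(wB U.card)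
          * ((k:ℝ)^N * ((n:ℝ)^(2*(tU U.card)+2)
            * (2:ℝ)^(-((s:ℝ)*(U.card:ℝ))/(2*(k:ℝ))))) := by
          apply mul_le_mul_of_nonneg_right hWScard (by positivity)
  -- define the per-cardinality bound
  set Φ : ℕ → ℝ := fun u => (((wB u : ℕ):ℝ)+1) * (n:ℝ)^(wB u)
      * ((k:ℝ)^N * ((n:ℝ)^(2*(tU u)+2) * (2:ℝ)^(-((s:ℝ)*(u:ℝ))/(2*(k:ℝ))))) with hΦdef
  have hΦ0 : ∀ u, 0 ≤ Φ u := by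
    intro u; rw [hΦdef]; positivity
  have hsumU : ∑ U ∈ validU, Φ U.card ≤ ∑ u ∈ Finset.Icc 1 n, (n:ℝ)^u * Φ u := by
    have hsub : validU ⊆ (Finset.Icc 1 n).biUnion
        (fun u => Finset.powersetCard u (Finset.univ : Finset V)) := by
      intro U hU
      rw [hvalidUdef, Finset.mem_filter] at hU
      rw [Finset.mem_biUnion]
      refine ⟨U.card, ?_, ?_⟩
      · rw [Finset.mem_Icc]
        refine ⟨hU.2.1, ?_⟩
        calc U.card ≤ (Finset.univ : Finset V).card := Finset.card_le_univ _
          _ = n := by rw [Finset.card_univ, hfc]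
      · rw [Finset.mem_powersetCard]; exact ⟨Finset.subset_univ _, rfl⟩
    have hdisj : ∀ a ∈ Finset.Icc 1 n, ∀ b ∈ Finset.Icc 1 n, a ≠ b →
        Disjoint (Finset.powersetCard a (Finset.univ : Finset V))
          (Finset.powersetCard b (Finset.univ : Finset V)) := by
      intro a _ b _ hab
      rw [Finset.disjoint_left]
      intro S hSa hSb
      rw [Finset.mem_powersetCard] at hSa hSb
      exact hab (hSa.2 ▸ hSb.2)
    calc ∑ U ∈ validU, Φ U.card
        ≤ ∑ U ∈ (Finset.Icc 1 n).biUnion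
            (fun u => Finset.powersetCard u (Finset.univ : Finset V)), Φ U.card :=
          Finset.sum_le_sum_of_subset_of_nonneg hsub (fun U _ _ => hΦ0 _)
      _ = ∑ u ∈ Finset.Icc 1 n, ∑ U ∈ Finset.powersetCard u (Finset.univ : Finset V),
            Φ U.card := Finset.sum_biUnion hdisj
      _ = ∑ u ∈ Finset.Icc 1 n, ((n.choose u : ℕ):ℝ) * Φ u := by
          refine Finset.sum_congr rfl (fun u _ => ?_)
          have hcongr : ∀ U ∈ Finset.powersetCard u (Finset.univ : Finset V),
              Φ U.card = Φ u := by
            intro U hU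
            rw [Finset.mem_powersetCard] at hU
            rw [hU.2]
          rw [Finset.sum_congr rfl hcongr, Finset.sum_const, Finset.card_powersetCard,
            Finset.card_univ, hfc, nsmul_eq_mul]
      _ ≤ ∑ u ∈ Finset.Icc 1 n, (n:ℝ)^u * Φ u := by
          refine Finset.sum_le_sum (fun u _ => ?_)
          apply mul_le_mul_of_nonneg_right _ (hΦ0 u)
          have h1 : n.choose u ≤ n^u :=
            le_trans (Nat.choose_le_descFactorial _ _) (Nat.descFactorial_le_pow _ _)
          exact_mod_cast h1
  have hperu : ∀ u ∈ Finset.Icc 1 n,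
      (k:ℝ) * ((n:ℝ)^u * Φ u) ≤ (2:ℝ)^(-(u:ℝ)-1) * (k:ℝ)^N := by
    intro u hu
    rw [Finset.mem_Icc] at hu
    have hb := per_u_bound n k s u (tU u) (wB u) ε L hn hk hu.1 hu.2 hε0 hε1 hL hLpow
      hsbig
      (by simp only [htUdef]; rw [hs'def]; exact Nat.floor_le (by positivity))
      (by simp only [hwBdef]; exact Nat.floor_le (by positivity))
    have heq : (k:ℝ) * ((n:ℝ)^u * Φ u)
        = ((k:ℝ) * (n:ℝ)^u * ((((wB u : ℕ):ℝ)+1) * (n:ℝ)^(wB u))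
            * ((n:ℝ)^(2*(tU u)+2) * (2:ℝ)^(-((s:ℝ)*(u:ℝ))/(2*(k:ℝ))))) * (k:ℝ)^N := by
      rw [hΦdef]; ring
    rw [heq]
    exact mul_le_mul_of_nonneg_right hb (by positivity)
  -- geometric sum
  have hsum2 : ∑ u ∈ Finset.Icc 1 n, (2:ℝ)^(-(u:ℝ)-1) < 1 := by
    have hterm : ∀ u : ℕ, (2:ℝ)^(-(u:ℝ)-1) = (1/2:ℝ)^(u+1) := by
      intro u
      rw [one_div, inv_pow, ← Real.rpow_natCast (2:ℝ) (u+1), ← Real.rpow_neg (by norm_num)]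
      congr 1; push_cast; ring
    have hsub : Finset.Icc 1 n ⊆ Finset.range (n+1) := by
      intro u hu; rw [Finset.mem_Icc] at hu; rw [Finset.mem_range]; omega
    have hle : ∑ u ∈ Finset.Icc 1 n, (2:ℝ)^(-(u:ℝ)-1)
        ≤ ∑ u ∈ Finset.range (n+1), (1/2:ℝ)^(u+1) := by
      rw [Finset.sum_congr rfl (fun u _ => hterm u)]
      exact Finset.sum_le_sum_of_subset_of_nonneg hsub (fun u _ _ => by positivity)
    have hgeq : ∑ u ∈ Finset.range (n+1), (1/2:ℝ)^(u+1)
        = (1/2) * ∑ u ∈ Finset.range (n+1), (1/2:ℝ)^u := by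
      rw [Finset.mul_sum]
      refine Finset.sum_congr rfl (fun u _ => ?_)
      rw [pow_succ]; ring
    have hg := geom_sum_eq (by norm_num : (1/2:ℝ) ≠ 1) (n+1)
    have hpow : (0:ℝ) < (1/2:ℝ)^(n+1) := by positivity
    have hval : ((1/2:ℝ)^(n+1)-1)/((1/2:ℝ)-1) = 2 - 2*(1/2:ℝ)^(n+1) := by
      field_simp; ring
    rw [hgeq, hg, hval] at hle
    linarith
  -- total bound
  have hkN0 : (0:ℝ) < (k:ℝ)^N := by positivity
  have hBound : (BadAll.card : ℝ) < (k:ℝ)^N := by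
    have c1 : BadAll.card ≤ ∑ i : Fin k, ∑ U ∈ validU, ∑ W ∈ WS U, (Bad i U W).card := by
      rw [hBadAlldef]
      refine le_trans Finset.card_biUnion_le (Finset.sum_le_sum fun i _ => ?_)
      refine le_trans Finset.card_biUnion_le (Finset.sum_le_sum fun U _ => ?_)
      exact Finset.card_biUnion_le
    have c2 : (BadAll.card : ℝ)
        ≤ ∑ i : Fin k, ∑ U ∈ validU, ∑ W ∈ WS U, ((Bad i U W).card : ℝ) := by
      have := (Nat.cast_le (α := ℝ)).mpr c1
      push_cast at this
      exact this
    have c3 : ∑ i : Fin k, ∑ U ∈ validU, ∑ W ∈ WS U, ((Bad i U W).card : ℝ)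
        ≤ ∑ i : Fin k, ∑ U ∈ validU, Φ U.card := by
      refine Finset.sum_le_sum (fun i _ => Finset.sum_le_sum (fun U hU => ?_))
      have := keyW i U hU
      rw [hΦdef]
      exact this
    have c4 : ∑ i : Fin k, ∑ U ∈ validU, Φ U.card = (k:ℝ) * ∑ U ∈ validU, Φ U.card := by
      rw [Finset.sum_const, Finset.card_univ, Fintype.card_fin, nsmul_eq_mul]
    have c5 : (k:ℝ) * ∑ U ∈ validU, Φ U.card ≤ (k:ℝ) * ∑ u ∈ Finset.Icc 1 n, (n:ℝ)^u * Φ u :=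
      mul_le_mul_of_nonneg_left hsumU (by positivity)
    have c6 : (k:ℝ) * ∑ u ∈ Finset.Icc 1 n, (n:ℝ)^u * Φ u
        = ∑ u ∈ Finset.Icc 1 n, (k:ℝ) * ((n:ℝ)^u * Φ u) := by
      rw [Finset.mul_sum]
    have c7 : ∑ u ∈ Finset.Icc 1 n, (k:ℝ) * ((n:ℝ)^u * Φ u)
        ≤ ∑ u ∈ Finset.Icc 1 n, (2:ℝ)^(-(u:ℝ)-1) * (k:ℝ)^N :=
      Finset.sum_le_sum hperu
    have c8 : ∑ u ∈ Finset.Icc 1 n, (2:ℝ)^(-(u:ℝ)-1) * (k:ℝ)^N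
        = (∑ u ∈ Finset.Icc 1 n, (2:ℝ)^(-(u:ℝ)-1)) * (k:ℝ)^N := by
      rw [Finset.sum_mul]
    have c9 : (∑ u ∈ Finset.Icc 1 n, (2:ℝ)^(-(u:ℝ)-1)) * (k:ℝ)^N < 1 * (k:ℝ)^N :=
      mul_lt_mul_of_pos_right hsum2 hkN0
    calc (BadAll.card : ℝ) ≤ _ := c2
      _ ≤ _ := c3
      _ = _ := c4
      _ ≤ _ := c5
      _ = _ := c6
      _ ≤ _ := c7
      _ = _ := c8
      _ < 1 * (k:ℝ)^N := c9
      _ = (k:ℝ)^N := one_mul _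
  have hltcard : BadAll.card < Fintype.card (Sym2 V → Fin k) := by
    rw [hcardΩ]
    exact_mod_cast hBound
  obtain ⟨c, hc⟩ : ∃ c : Sym2 V → Fin k, c ∉ BadAll := by
    by_contra h
    push_neg at h
    have hsub : (Finset.univ : Finset (Sym2 V → Fin k)) ⊆ BadAll := fun c _ => h c
    have := Finset.card_le_card hsub
    rw [Finset.card_univ] at this
    omega
  refine ⟨c, ?_⟩
  intro i U W hU1 hU2 hW
  have hUmem : U ∈ validU := by
    rw [hvalidUdef, Finset.mem_filter]
    exact ⟨Finset.mem_univ _, hU1, hU2⟩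
  have hWmem : W ∈ WS U := by
    simp only [hWSdef, Finset.mem_filter]
    refine ⟨Finset.mem_univ _, ?_⟩
    rw [hwBdef]
    exact Nat.le_floor hW
  have hcBad : c ∉ Bad i U W := by
    intro hmem
    exact hc (Finset.mem_biUnion.mpr ⟨i, Finset.mem_univ _,
      Finset.mem_biUnion.mpr ⟨U, hUmem, Finset.mem_biUnion.mpr ⟨W, hWmem, hmem⟩⟩⟩)
  have hgt : tU U.card < ((leaveEdges G U W).filter (fun e => c e = i)).card := by
    by_contra hle
    push_neg at hle
    apply hcBad
    simp only [hBaddef, Finset.mem_filter]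
    exact ⟨Finset.mem_univ _, hle⟩
  have hfl : s' * U.card < (tU U.card : ℝ) + 1 := by
    rw [htUdef]
    exact Nat.lt_floor_add_one _
  have hcnt : (tU U.card : ℝ) + 1 ≤ ((leaveEdges G U W).filter (fun e => c e = i)).card := by
    exact_mod_cast hgt
  linarith


lemma expander_of_card_one {V : Type} (G' : SimpleGraph V) (h1 : Nat.card V = 1)
    (ε s : ℝ) : IsExpander G' ε s := by
  intro U F _ hU1 hU2 _
  rw [h1] at hU2
  have h2 : (1:ℝ) ≤ (U.ncard:ℝ) := by exact_mod_cast hU1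
  norm_num at hU2
  linarith


/-- An `(ε,s)`-expander with `s ≥ 2¹²ε⁻¹k²(log n)⁴` has its edges partitioned into `k`
edge disjoint graphs on the same vertex set, each an `(ε/4, √(sε)/(8k·log n))`-expander. -/
theorem edge_partition_into_expanders
    (n k s : ℕ) (hn : 0 < n) (hk : 0 < k) (hs : 0 < s)
    (ε : ℝ) (hε0 : 0 < ε) (hε1 : ε ≤ 1)
    (V : Type) [Fintype V] (G : SimpleGraph V) (hcard : Nat.card V = n)
    (hG : IsExpander G ε s)
    (hsbig : 2 ^ 12 * ε⁻¹ * (k : ℝ) ^ 2 * (Real.logb 2 n) ^ 4 ≤ (s : ℝ)) :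
    ∃ H : Fin k → SimpleGraph V,
      (∀ i j, i ≠ j → Disjoint (H i).edgeSet (H j).edgeSet) ∧
      ((⋃ i, (H i).edgeSet) = G.edgeSet) ∧
      (∀ i, IsExpander (H i) (ε / 4) (Real.sqrt ((s : ℝ) * ε) / (8 * k * Real.logb 2 n))) := by
  by_cases hn2 : n < 2
  · -- n = 1 : everything is vacuously an expander
    have hn1 : Nat.card V = 1 := by omega
    refine ⟨fun i => if i = ⟨0, hk⟩ then G else ⊥, ?_, ?_, ?_⟩
    · intro i j hij
      by_cases hi : i = ⟨0, hk⟩ <;> by_cases hj : j = ⟨0, hk⟩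
      · exact absurd (hi.trans hj.symm) hij
      · simp [hi, hj]
      · simp [hi, hj]
      · simp [hi, hj]
    · apply subset_antisymm
      · apply Set.iUnion_subset
        intro i
        by_cases hi : i = ⟨0, hk⟩ <;> simp [hi]
      · intro e he
        exact Set.mem_iUnion.mpr ⟨⟨0, hk⟩, by simpa⟩
    · intro i
      exact expander_of_card_one _ hn1 _ _
  · push_neg at hn2
    have hnR : (2:ℝ) ≤ n := by exact_mod_cast hn2
    have hL : 1 ≤ Real.logb 2 (n:ℝ) := by
      rw [Real.le_logb_iff_rpow_le one_lt_two (by linarith)]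
      rw [Real.rpow_one]; exact hnR
    have hs1 : (1:ℝ) ≤ (s:ℝ) := by exact_mod_cast hs
    by_cases hk2 : k < 2
    · -- k = 1
      have hk1 : k = 1 := by omega
      subst hk1
      refine ⟨fun _ => G, ?_, ?_, ?_⟩
      · intro i j hij
        exact absurd (Subsingleton.elim i j) hij
      · exact Set.iUnion_const _
      · intro i
        apply expander_mono hG (by positivity) (by linarith)
        have h1 : Real.sqrt ((s:ℝ)*ε) ≤ s := sqrt_mul_le_self' hs1 hε0.le hε1
        have h2 : (1:ℝ) ≤ 8 * (1:ℕ) * Real.logb 2 (n:ℝ) := by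
          push_cast; linarith
        calc Real.sqrt ((s:ℝ)*ε) / (8 * (1:ℕ) * Real.logb 2 (n:ℝ))
            ≤ Real.sqrt ((s:ℝ)*ε) := div_le_self (Real.sqrt_nonneg _) h2
          _ ≤ s := h1
    · -- main case : k ≥ 2, n ≥ 2
      push_neg at hk2
      obtain ⟨c, hc⟩ := exists_good_coloring G n k s hn2 hk2 ε hε0 hε1 hcard hG hsbig
      set H : Fin k → SimpleGraph V :=
        fun i => SimpleGraph.fromEdgeSet {e | e ∈ G.edgeSet ∧ c e = i} with hHdef
      have hHe : ∀ i, (H i).edgeSet = {e | e ∈ G.edgeSet ∧ c e = i} := by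
        intro i
        rw [hHdef]
        ext e
        simp only [SimpleGraph.edgeSet_fromEdgeSet, Set.mem_diff, Set.mem_setOf_eq]
        constructor
        · rintro ⟨h, -⟩; exact h
        · intro h
          exact ⟨h, fun hd => (SimpleGraph.not_isDiag_of_mem_edgeSet G h.1) hd⟩
      refine ⟨H, ?_, ?_, ?_⟩
      · intro i j hij
        rw [Set.disjoint_left]
        intro e hei hej
        rw [hHe i] at hei
        rw [hHe j] at hej
        exact hij (hei.2 ▸ hej.2)
      · apply subset_antisymm
        · apply Set.iUnion_subset
          intro i e he
          rw [hHe i] at he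
          exact he.1
        · intro e he
          exact Set.mem_iUnion.mpr ⟨c e, by rw [hHe]; exact ⟨he, rfl⟩⟩
      · intro i
        intro Uset F hF hU1 hU2 hFc
        rw [hcard] at hU2 ⊢
        set U : Finset V := (Set.toFinite Uset).toFinset with hUdef
        have hUcard : Uset.ncard = U.card := Set.ncard_eq_toFinset_card _ _
        set Wset : Set V := nbhdOutside ((H i).deleteEdges F) Uset with hWsetdef
        set W : Finset V := (Set.toFinite Wset).toFinset with hWdef
        have hWcard : Wset.ncard = W.card := Set.ncard_eq_toFinset_card _ _
        by_contra hcon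
        push_neg at hcon
        rw [hWcard, hUcard] at hcon
        have hU1' : 1 ≤ U.card := by rwa [hUcard] at hU1
        have hU2' : (U.card : ℝ) ≤ 2/3 * n := by rwa [hUcard] at hU2
        have hW' : (W.card : ℝ) ≤ ε * U.card / (4 * (Real.logb 2 (n:ℝ))^2) := by
          have heq : ε/4 * (U.card:ℝ) / (Real.logb 2 (n:ℝ))^2
              = ε * U.card / (4 * (Real.logb 2 (n:ℝ))^2) := by ring
          linarith [heq ▸ hcon]
        have hgood := hc i U W hU1' hU2' hW'
        -- every colour-i leaving edge must be in F
        have hsubF : (leaveEdges G U W).filter (fun e => c e = i)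
            ⊆ (Set.toFinite F).toFinset := by
          intro e he
          simp only [leaveEdges, Finset.mem_filter, SimpleGraph.mem_edgeFinset,
            SimpleGraph.mem_edgeSet] at he
          obtain ⟨⟨heG, x, hxU, y, hyU, hyW, rfl⟩, hci⟩ := he
          rw [Set.Finite.mem_toFinset]
          by_contra heF
          have hxyG : G.Adj x y := heG
          have hxy : (H i).Adj x y := by
            rw [hHdef, SimpleGraph.fromEdgeSet_adj]
            exact ⟨⟨(SimpleGraph.mem_edgeSet G).mpr hxyG, hci⟩, hxyG.ne⟩
          have hadj : ((H i).deleteEdges F).Adj y x := by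
            rw [SimpleGraph.deleteEdges_adj]
            refine ⟨hxy.symm, ?_⟩
            rwa [Sym2.eq_swap]
          have hyUset : y ∉ Uset := by
            rw [hUdef, Set.Finite.mem_toFinset] at hyU
            exact hyU
          have hxUset : x ∈ Uset := by
            rw [hUdef, Set.Finite.mem_toFinset] at hxU
            exact hxU
          have hyW2 : y ∈ Wset := ⟨hyUset, x, hxUset, hadj⟩
          rw [hWdef, Set.Finite.mem_toFinset] at hyW
          exact hyW hyW2
        have hcnt : (((leaveEdges G U W).filter (fun e => c e = i)).card : ℝ)
            ≤ (F.ncard : ℝ) := by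
          have h1 := Finset.card_le_card hsubF
          have h2 : (Set.toFinite F).toFinset.card = F.ncard :=
            (Set.ncard_eq_toFinset_card _ _).symm
          rw [h2] at h1
          exact_mod_cast h1
        rw [hUcard] at hFc
        linarith
end
end

section
/- Let n ≥ 2, 0 < ε ≤ 1 and s ≥ (log n)^24. Let G be an n-vertex (ε,s)-expander and let U ⊆ V(G) have size |U| ≤ (2/3)n. Then there is a set U' ⊆ U with |N_G(U')| ≥ |U'|·(log n)^24 and |U'| ≥ ε|U|/(3(log n)^26). -/
set_option maxHeartbeats 1000000 in
/-- Every `U` with `|U| ≤ (2/3)n` in an `(ε,s)`-expander contains a well-expanding subset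
`U'` with `|N_G(U')| ≥ |U'|(log n)²⁴` and `|U'| ≥ ε|U|/(3(log n)²⁶)`. -/
theorem well_expanding_core
    (n : ℕ) (hn : 2 ≤ n) (ε s : ℝ) (hε0 : 0 < ε) (hε1 : ε ≤ 1)
    (hs : (Real.logb 2 n) ^ 24 ≤ s)
    (V : Type) [Fintype V] (G : SimpleGraph V) (hcard : Nat.card V = n)
    (hG : IsExpander G ε s)
    (U : Set V) (hU : (U.ncard : ℝ) ≤ 2 / 3 * n) :
    ∃ U' ⊆ U,
      (U'.ncard : ℝ) * (Real.logb 2 n) ^ 24 ≤ ((nbhdOutside G U').ncard : ℝ) ∧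
      ε * (U.ncard : ℝ) / (3 * (Real.logb 2 n) ^ 26) ≤ (U'.ncard : ℝ) := by
  classical
  have hn2 : (2:ℝ) ≤ (n:ℝ) := by exact_mod_cast hn
  set L : ℝ := Real.logb 2 (n:ℝ) with hLdef
  have hL1 : 1 ≤ L := by
    calc (1:ℝ) = Real.logb 2 2 := by simp
      _ ≤ L := Real.logb_le_logb_of_le (by norm_num) (by norm_num) hn2
  have hL0 : 0 < L := by linarith
  have hLne : L ≠ 0 := ne_of_gt hL0
  have hL26 : (1:ℝ) ≤ L ^ 26 := one_le_pow₀ hL1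
  set u : ℕ := U.ncard with hudef
  set lam : ℝ := L ^ 24 with hlamdef
  have hlam0 : 0 < lam := by positivity
  set m' : ℝ := ε * (u:ℝ) / (3 * L ^ 26) with hm'def
  have hm'0 : 0 ≤ m' := by positivity
  by_cases hm'1 : m' ≤ 1
  · -- small case
    rcases U.eq_empty_or_nonempty with hUe | ⟨v, hv⟩
    · refine ⟨∅, Set.empty_subset U, ?_, ?_⟩
      · simp [nbhdOutside]
      · have hu0 : u = 0 := by rw [hudef, hUe, Set.ncard_empty]
        have hmz : m' = 0 := by rw [hm'def, hu0]; norm_num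
        rw [hmz]
        simp
    · -- singleton
      have hNv : nbhdOutside G {v} = G.neighborSet v := by
        ext x
        constructor
        · rintro ⟨hx, y, hy, hadj⟩
          rcases hy with rfl
          exact hadj.symm
        · intro hx
          exact ⟨fun h => (G.ne_of_adj hx).symm (by simpa using h), v, rfl, hx.symm⟩
      have hdeg : lam ≤ ((nbhdOutside G {v}).ncard : ℝ) := by
        by_contra hlt
        push_neg at hlt
        set F : Set (Sym2 V) := (fun x => s(v, x)) '' (G.neighborSet v) with hFdef
        have hFsub : F ⊆ G.edgeSet := by
          rintro e ⟨x, hx, rfl⟩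
          exact (G.mem_edgeSet).mpr hx
        have hFcard : (F.ncard : ℝ) ≤ s * (({v} : Set V).ncard : ℝ) := by
          rw [Set.ncard_singleton]
          have h1 : F.ncard ≤ (G.neighborSet v).ncard :=
            Set.ncard_image_le (Set.toFinite _)
          have h2 : ((G.neighborSet v).ncard : ℝ) < lam := by
            rw [← hNv]; exact hlt
          have h3 : (F.ncard : ℝ) ≤ ((G.neighborSet v).ncard : ℝ) := by exact_mod_cast h1
          push_cast
          linarith
        have happ := hG {v} F hFsub (by simp) (by rw [hcard, Set.ncard_singleton]; push_cast; linarith) hFcard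
        have hempty : nbhdOutside (G.deleteEdges F) {v} = ∅ := by
          ext x
          simp only [Set.mem_empty_iff_false, iff_false]
          rintro ⟨hx, y, hy, hadj⟩
          rcases hy with rfl
          rw [SimpleGraph.deleteEdges_adj] at hadj
          exact hadj.2 ⟨x, hadj.1.symm, Sym2.eq_swap⟩
        rw [hcard, hempty] at happ
        simp only [Set.ncard_singleton, Set.ncard_empty, Nat.cast_one, Nat.cast_zero, mul_one] at happ
        have : 0 < ε / L ^ 2 := by positivity
        rw [← hLdef] at happ
        linarith
      refine ⟨{v}, by simpa using hv, ?_, ?_⟩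
      · rw [Set.ncard_singleton]
        push_cast
        linarith
      · rw [Set.ncard_singleton]
        push_cast
        exact hm'1
  · -- main case
    push_neg at hm'1
    have hεu3 : 3 * L ^ 26 < ε * (u:ℝ) := by
      have h := hm'1
      rw [hm'def, lt_div_iff₀ (by positivity : (0:ℝ) < 3 * L ^ 26)] at h
      linarith
    have hεuu : ε * (u:ℝ) ≤ (u:ℝ) := mul_le_of_le_one_left (Nat.cast_nonneg u) hε1
    have huR : (3:ℝ) < (u:ℝ) := by linarith
    have hun : u ≤ n := by
      rw [hudef, ← hcard, ← Set.ncard_univ]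
      exact Set.ncard_le_ncard (Set.subset_univ U) (Set.toFinite _)
    have hn4 : (4:ℝ) ≤ (n:ℝ) := by
      have : (4:ℕ) ≤ u := by exact_mod_cast (by exact_mod_cast huR : (3:ℕ) < u)
      have : (4:ℕ) ≤ n := le_trans this hun
      exact_mod_cast this
    have hL2 : 2 ≤ L := by
      have h4 : Real.logb 2 4 = 2 := by
        rw [show (4:ℝ) = 2 ^ (2:ℕ) by norm_num, Real.logb_pow]
        simp
      calc (2:ℝ) = Real.logb 2 4 := h4.symm
        _ ≤ L := Real.logb_le_logb_of_le (by norm_num) (by norm_num) hn4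
    have hlam5 : (5:ℝ) ≤ lam := by
      calc (5:ℝ) ≤ 2 ^ 24 := by norm_num
        _ ≤ L ^ 24 := pow_le_pow_left₀ (by norm_num) hL2 24
    set c : ℝ := ε / L ^ 2 with hcdef
    have hc0 : 0 < c := by positivity
    have hc4 : c ≤ 1 / 4 := by
      rw [hcdef, div_le_div_iff₀ (by positivity) (by norm_num)]
      nlinarith [hL2]
    have hA : c * (u:ℝ) = 3 * lam * m' := by
      rw [hcdef, hm'def, hlamdef]
      field_simp
    set m : ℕ := ⌈m'⌉₊ with hmdef
    have hm_ge : m' ≤ (m:ℝ) := Nat.le_ceil m'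
    have hm_le : (m:ℝ) < m' + 1 := Nat.ceil_lt_add_one hm'0
    have hm2m : (m:ℝ) ≤ 2 * m' := by linarith
    have hm_u : m ≤ u := by
      rw [hmdef]
      apply Nat.ceil_le.mpr
      have : m' ≤ (u:ℝ) := by
        rw [hm'def]
        refine le_trans (div_le_self (by positivity) (by nlinarith)) hεuu
      exact this
    have hu12 : 12 * lam * m' ≤ (u:ℝ) := by
      have h := mul_le_mul_of_nonneg_right hc4 (Nat.cast_nonneg (α := ℝ) u)
      linarith only [hA, h]
    have h5m : 5 * m' ≤ lam * m' := mul_le_mul_of_nonneg_right hlam5 hm'0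
    -- key induction
    have key : ∀ i : ℕ, i ≤ m → ∃ U' : Set V, U' ⊆ U ∧ U'.ncard = i ∧
        lam * (i:ℝ) ≤ ((nbhdOutside G U').ncard : ℝ) := by
      intro i
      induction i with
      | zero =>
        intro _
        exact ⟨∅, Set.empty_subset U, Set.ncard_empty _, by norm_num⟩
      | succ i ih =>
        intro hi1
        obtain ⟨U', hU'sub, hU'card, hinv⟩ := ih (Nat.le_of_succ_le_succ (Nat.le_succ_of_le hi1))
        by_cases hEx : ∃ w ∈ U \ U',
            lam * ((i:ℝ) + 1) ≤ ((nbhdOutside G (insert w U')).ncard : ℝ)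
        · obtain ⟨w, hw, hgood⟩ := hEx
          refine ⟨insert w U', Set.insert_subset hw.1 hU'sub, ?_, ?_⟩
          · rw [Set.ncard_insert_of_notMem hw.2 (Set.toFinite _), hU'card]
          · push_cast
            exact hgood
        · push_neg at hEx
          exfalso
          have hiltm : i < m := hi1
          have hi1R : (i:ℝ) + 1 ≤ (m:ℝ) := by exact_mod_cast hi1
          -- U \ U' nonempty
          have hdn : (U \ U').ncard = u - i := by
            rw [Set.ncard_diff hU'sub (Set.toFinite _), hU'card]
          have hdiffR : ((U \ U').ncard : ℝ) = (u:ℝ) - (i:ℝ) := by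
            rw [hdn, Nat.cast_sub (le_trans (le_of_lt hiltm) hm_u)]
          have hwne : (U \ U').Nonempty := by
            rw [← Set.ncard_pos (Set.toFinite _), hdn]
            omega
          obtain ⟨w₀, hw₀⟩ := hwne
          set Z : Set V := nbhdOutside G U' with hZdef
          have hZw : Z \ {w₀} ⊆ nbhdOutside G (insert w₀ U') := by
            rintro x ⟨⟨hx1, y, hy, hadj⟩, hx2⟩
            refine ⟨?_, y, Set.mem_insert_of_mem _ hy, hadj⟩
            rintro (rfl | h)
            · exact hx2 rfl
            · exact hx1 h
          have hH2 : ((Z.ncard : ℝ)) < lam * ((i:ℝ) + 1) + 1 := by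
            have h1 : Z.ncard ≤ (Z \ {w₀}).ncard + 1 := by
              calc Z.ncard ≤ ((Z \ {w₀}) ∪ {w₀}).ncard := by
                    apply Set.ncard_le_ncard _ (Set.toFinite _)
                    intro x hx
                    by_cases hxw : x = w₀
                    · exact Or.inr (by simp [hxw])
                    · exact Or.inl ⟨hx, hxw⟩
                _ ≤ (Z \ {w₀}).ncard + ({w₀} : Set V).ncard := Set.ncard_union_le _ _
                _ = (Z \ {w₀}).ncard + 1 := by rw [Set.ncard_singleton]
            have h2 : (((Z \ {w₀}).ncard : ℝ)) < lam * ((i:ℝ) + 1) := by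
              refine lt_of_le_of_lt ?_ (hEx w₀ hw₀)
              exact_mod_cast Set.ncard_le_ncard hZw (Set.toFinite _)
            have h1R : ((Z.ncard : ℝ)) ≤ ((Z \ {w₀}).ncard : ℝ) + 1 := by exact_mod_cast h1
            linarith only [h1R, h2]
          set W₁ : Set V := (U \ U') \ Z with hW₁def
          have hW₁U : W₁ ⊆ U := fun x hx => hx.1.1
          set newn : V → Set V := fun w => G.neighborSet w \ (Z ∪ U) with hnewndef
          have hnewcard : ∀ w ∈ W₁, ((newn w).ncard : ℝ) < lam := by
            intro w hw
            have hwU : w ∈ U := hw.1.1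
            have hwU' : w ∉ U' := hw.1.2
            have hwZ : w ∉ Z := hw.2
            have hsub2 : Z ∪ newn w ⊆ nbhdOutside G (insert w U') := by
              rintro x (hxZ | hxN)
              · obtain ⟨hx1, y, hy, hadj⟩ := hxZ
                refine ⟨?_, y, Set.mem_insert_of_mem _ hy, hadj⟩
                rintro (rfl | h)
                · exact hwZ ⟨hx1, y, hy, hadj⟩
                · exact hx1 h
              · obtain ⟨hx1, hx2⟩ := hxN
                refine ⟨?_, w, Set.mem_insert _ _, hx1.symm⟩
                rintro (rfl | h)
                · exact hx2 (Or.inr hwU)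
                · exact hx2 (Or.inr (hU'sub h))
            have hdisj : Disjoint Z (newn w) := by
              rw [Set.disjoint_left]
              intro x hxZ hxN
              exact hxN.2 (Or.inl hxZ)
            have hunion : (Z ∪ newn w).ncard = Z.ncard + (newn w).ncard :=
              Set.ncard_union_eq hdisj (Set.toFinite _) (Set.toFinite _)
            have hle : (Z ∪ newn w).ncard ≤ (nbhdOutside G (insert w U')).ncard :=
              Set.ncard_le_ncard hsub2 (Set.toFinite _)
            have hb := hEx w hw.1
            have hbig : ((Z.ncard : ℝ)) + ((newn w).ncard : ℝ) < lam * ((i:ℝ) + 1) := by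
              have : ((Z.ncard : ℝ)) + ((newn w).ncard : ℝ) ≤ ((nbhdOutside G (insert w U')).ncard : ℝ) := by
                rw [← Nat.cast_add, ← hunion]
                exact_mod_cast hle
              linarith
            have hlamd : lam * ((i:ℝ) + 1) = lam * (i:ℝ) + lam := by ring
            linarith only [hinv, hbig, hlamd]
          -- the edge set F
          set t : Finset V := (Set.toFinite W₁).toFinset with htdef
          have htmem : ∀ x, x ∈ t ↔ x ∈ W₁ := fun x => Set.Finite.mem_toFinset _
          have htcard : t.card = W₁.ncard :=
            (Set.ncard_eq_toFinset_card W₁ (Set.toFinite W₁)).symm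
          set Ffin : Finset (Sym2 V) :=
            t.biUnion (fun w => ((Set.toFinite (newn w)).toFinset).image (fun x => s(w, x))) with hFfindef
          have hFmem : ∀ e, e ∈ Ffin ↔ ∃ w ∈ W₁, ∃ x ∈ newn w, s(w, x) = e := by
            intro e
            rw [hFfindef]
            simp only [Finset.mem_biUnion, Finset.mem_image, Set.Finite.mem_toFinset]
            constructor
            · rintro ⟨w, hw, x, hx, rfl⟩
              exact ⟨w, (htmem w).mp hw, x, hx, rfl⟩
            · rintro ⟨w, hw, x, hx, rfl⟩
              exact ⟨w, (htmem w).mpr hw, x, hx, rfl⟩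
          have hFsubE : (↑Ffin : Set (Sym2 V)) ⊆ G.edgeSet := by
            intro e he
            rw [Finset.mem_coe, hFmem] at he
            obtain ⟨w, hw, x, hx, rfl⟩ := he
            exact (G.mem_edgeSet).mpr hx.1
          have hFcard : (((↑Ffin : Set (Sym2 V)).ncard : ℝ)) ≤ lam * (W₁.ncard : ℝ) := by
            rw [Set.ncard_coe_finset]
            have h1 : (Ffin.card : ℝ) ≤ ∑ w ∈ t, (((newn w).ncard : ℝ)) := by
              have hb := Finset.card_biUnion_le (s := t)
                (t := fun w => ((Set.toFinite (newn w)).toFinset).image (fun x => s(w, x)))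
              have h2 : ∀ w ∈ t, (((Set.toFinite (newn w)).toFinset).image (fun x => s(w, x))).card ≤ (newn w).ncard := by
                intro w _
                calc _ ≤ ((Set.toFinite (newn w)).toFinset).card := Finset.card_image_le
                  _ = (newn w).ncard := by rw [Set.ncard_eq_toFinset_card (newn w) (Set.toFinite _)]
              have h3 : Ffin.card ≤ ∑ w ∈ t, (newn w).ncard :=
                le_trans hb (Finset.sum_le_sum h2)
              calc (Ffin.card : ℝ) ≤ ((∑ w ∈ t, (newn w).ncard : ℕ) : ℝ) := by exact_mod_cast h3
                _ = ∑ w ∈ t, (((newn w).ncard : ℝ)) := by push_cast; rfl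
            calc (Ffin.card : ℝ) ≤ ∑ w ∈ t, (((newn w).ncard : ℝ)) := h1
              _ ≤ ∑ _w ∈ t, lam := Finset.sum_le_sum (fun w hw => le_of_lt (hnewcard w ((htmem w).mp hw)))
              _ = t.card * lam := by rw [Finset.sum_const, nsmul_eq_mul]
              _ = lam * (W₁.ncard : ℝ) := by rw [htcard]; ring
          -- size bounds for W₁
          have hW₁le : ((U \ U').ncard) ≤ W₁.ncard + Z.ncard := by
            have hsub : (U \ U') ⊆ W₁ ∪ Z := by
              intro x hx
              by_cases hxZ : x ∈ Z
              · exact Or.inr hxZ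
              · exact Or.inl ⟨hx, hxZ⟩
            exact le_trans (Set.ncard_le_ncard hsub (Set.toFinite _)) (Set.ncard_union_le _ _)
          have hW₁geR : (u:ℝ) - (i:ℝ) - (Z.ncard : ℝ) ≤ ((W₁.ncard : ℝ)) := by
            have h2 : ((U \ U').ncard : ℝ) ≤ (W₁.ncard : ℝ) + (Z.ncard : ℝ) := by exact_mod_cast hW₁le
            rw [hdiffR] at h2
            linarith only [h2]
          have hlam_im : lam * ((i:ℝ) + 1) ≤ lam * (m:ℝ) :=
            mul_le_mul_of_nonneg_left hi1R (le_of_lt hlam0)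
          have hlam_m : lam * (m:ℝ) ≤ lam * (2 * m') :=
            mul_le_mul_of_nonneg_left hm2m (le_of_lt hlam0)
          have hm'lam : 2 * m' ≤ 10 * (lam * m') := by linarith only [h5m, hm'0]
          have hW₁posR : (0:ℝ) < ((W₁.ncard : ℝ)) := by
            linarith only [hlam_im, hlam_m, hm'lam, hH2, hi1R, hm2m, hu12, hW₁geR]
          have hW₁pos : 1 ≤ W₁.ncard := Nat.cast_pos.mp hW₁posR
          have hW₁n : ((W₁.ncard : ℝ)) ≤ 2 / 3 * (n:ℝ) := by
            refine le_trans ?_ hU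
            exact_mod_cast Set.ncard_le_ncard hW₁U (Set.toFinite _)
          have hFle : (((↑Ffin : Set (Sym2 V)).ncard : ℝ)) ≤ s * (W₁.ncard : ℝ) := by
            refine le_trans hFcard ?_
            exact mul_le_mul_of_nonneg_right hs (Nat.cast_nonneg _)
          have happ := hG W₁ (↑Ffin) hFsubE hW₁pos (by rw [hcard]; exact hW₁n) hFle
          rw [hcard] at happ
          have hNsub : nbhdOutside (G.deleteEdges (↑Ffin)) W₁ ⊆ Z ∪ U' := by
            rintro x ⟨hx1, w, hw, hadj⟩
            rw [SimpleGraph.deleteEdges_adj] at hadj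
            obtain ⟨hadj, hnF⟩ := hadj
            by_contra hxZ
            rw [Set.mem_union] at hxZ
            push_neg at hxZ
            by_cases hxU : x ∈ U
            · exact hx1 ⟨⟨hxU, hxZ.2⟩, hxZ.1⟩
            · apply hnF
              rw [Finset.mem_coe, hFmem]
              refine ⟨w, hw, x, ⟨hadj.symm, ?_⟩, Sym2.eq_swap⟩
              rintro (h | h)
              · exact hxZ.1 h
              · exact hxU h
          have hNle : ((nbhdOutside (G.deleteEdges (↑Ffin)) W₁).ncard : ℝ) ≤ (Z.ncard : ℝ) + (i:ℝ) := by
            have h1 : (nbhdOutside (G.deleteEdges (↑Ffin)) W₁).ncard ≤ (Z ∪ U').ncard :=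
              Set.ncard_le_ncard hNsub (Set.toFinite _)
            have h2 : (Z ∪ U').ncard ≤ Z.ncard + U'.ncard := Set.ncard_union_le _ _
            rw [hU'card] at h2
            exact_mod_cast le_trans h1 h2
          have hmain : c * ((W₁.ncard : ℝ)) ≤ (Z.ncard : ℝ) + (i:ℝ) := by
            have heq : ε * ((W₁.ncard : ℝ)) / L ^ 2 = c * ((W₁.ncard : ℝ)) := by
              rw [hcdef]; ring
            rw [← hLdef, heq] at happ
            exact le_trans happ hNle
          have hcmain : c * ((u:ℝ) - (i:ℝ) - (Z.ncard : ℝ)) ≤ (Z.ncard : ℝ) + (i:ℝ) := by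
            have h := mul_le_mul_of_nonneg_left hW₁geR (le_of_lt hc0)
            linarith only [h, hmain]
          have hXnn : (0:ℝ) ≤ (Z.ncard : ℝ) + (i:ℝ) := by positivity
          have h54 : c * (u:ℝ) ≤ (5/4) * ((Z.ncard : ℝ) + (i:ℝ)) := by
            have h := mul_le_mul_of_nonneg_right hc4 hXnn
            linarith only [hcmain, h]
          have hXlt : (Z.ncard : ℝ) + (i:ℝ) < (lam + 1) * (2 * m') := by
            linarith only [hH2, hlam_im, hlam_m, hi1R, hm2m]
          linarith only [hA, h54, hXlt, h5m]
    obtain ⟨U', h1, h2, h3⟩ := key m le_rfl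
    refine ⟨U', h1, ?_, ?_⟩
    · rw [h2]
      linarith
    · rw [h2]
      exact hm_ge
end

section
/- Let 1 ≤ ℓ, t ≤ n. Let G be an n-vertex graph and let V ⊆ V(G) be a set of size |V| ≥ 4t − 2 such that for every U ⊆ V(G) with |U| = t we have |B^ℓ_G(U,V)| > |V|/2. Let x₁, …, x_{2t−1}, y₁, …, y_{2t−1} be distinct vertices of G. Then, for some j ∈ [2t−1], there is an x_j y_j-path in G all of whose internal vertices lie in V, with length at most 4ℓ·log n. -/
/-- `B^r_G(U,W)`: the set of vertices of `W` reachable from some vertex of `U` by a path in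
`G` of length at most `r` all of whose internal vertices lie in `W`. -/
def ballThrough {V : Type} (G : SimpleGraph V) (r : ℝ) (U W : Set V) : Set V :=
  {v | v ∈ W ∧ ∃ u ∈ U, ∃ p : G.Walk u v, p.IsPath ∧ ((p.length : ℝ) ≤ r) ∧
    ∀ w ∈ p.support.tail.dropLast, w ∈ W}

namespace ConnectOnePairAux

open SimpleGraph

variable {V : Type} {G : SimpleGraph V}

lemma support_eq_dropLast_concat {a b : V} (p : G.Walk a b) :
    p.support = p.support.dropLast ++ [b] := by
  induction p with
  | nil => simp
  | @cons u c w h q ih =>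
    rw [Walk.support_cons, List.dropLast_cons_of_ne_nil q.support_ne_nil, List.cons_append,
      ← ih]

lemma tail_eq_dropLast_concat {a b : V} (p : G.Walk a b) (ht : p.support.tail ≠ []) :
    p.support.tail = p.support.tail.dropLast ++ [b] := by
  cases p with
  | nil => simp at ht
  | @cons u c w h q =>
    simpa using support_eq_dropLast_concat q

lemma mem_support_cases {a b z : V} (p : G.Walk a b) (hz : z ∈ p.support) :
    z = a ∨ z ∈ p.support.tail.dropLast ∨ z = b := by
  rw [Walk.support_eq_cons p] at hz
  rcases List.mem_cons.mp hz with h | h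
  · exact Or.inl h
  by_cases ht : p.support.tail = []
  · rw [ht] at h; simp at h
  · rw [tail_eq_dropLast_concat p ht] at h
    rcases List.mem_append.mp h with h1 | h1
    · exact Or.inr (Or.inl h1)
    · exact Or.inr (Or.inr (by simpa using h1))

lemma internal_ne {a b z : V} {p : G.Walk a b} (hp : p.IsPath)
    (hz : z ∈ p.support.tail.dropLast) : z ≠ a ∧ z ≠ b := by
  have hnd := hp.support_nodup
  rw [Walk.support_eq_cons p] at hnd
  have hz' : z ∈ p.support.tail := List.dropLast_subset _ hz
  constructor
  · rintro rfl
    exact (List.nodup_cons.mp hnd).1 hz'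
  · intro hzb
    have ht : p.support.tail ≠ [] := by
      intro h; rw [h] at hz; simp at hz
    have h2 := tail_eq_dropLast_concat p ht
    have hnd2 : (p.support.tail.dropLast ++ [b]).Nodup := by
      rw [← h2]; exact (List.nodup_cons.mp hnd).2
    rcases List.nodup_append'.mp hnd2 with ⟨_, _, hdisj⟩
    exact hdisj hz (by simp [hzb])

lemma exists_path_of_walk {W : Set V} {a b : V} (w : G.Walk a b)
    (h : ∀ z ∈ w.support, z = a ∨ z = b ∨ z ∈ W) :
    ∃ p : G.Walk a b, p.IsPath ∧ p.length ≤ w.length ∧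
      ∀ z ∈ p.support.tail.dropLast, z ∈ W := by
  classical
  refine ⟨w.bypass, w.bypass_isPath, w.length_bypass_le, ?_⟩
  intro z hz
  have hzs : z ∈ w.bypass.support := List.tail_subset _ (List.dropLast_subset _ hz)
  have hne := internal_ne w.bypass_isPath hz
  rcases h z (w.support_bypass_subset hzs) with h1 | h1 | h1
  · exact absurd h1 hne.1
  · exact absurd h1 hne.2
  · exact h1

lemma ballThrough_mono {r s : ℝ} (hrs : r ≤ s) {U W : Set V} :
    ballThrough G r U W ⊆ ballThrough G s U W := by
  rintro v ⟨hvW, u, hu, p, hp, hl, hint⟩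
  exact ⟨hvW, u, hu, p, hp, hl.trans hrs, hint⟩

lemma mem_ball_singleton {r : ℝ} {U W : Set V} {z : V} (h : z ∈ ballThrough G r U W) :
    ∃ u ∈ U, z ∈ ballThrough G r {u} W := by
  obtain ⟨hzW, u, hu, p, hp, hl, hint⟩ := h
  exact ⟨u, hu, hzW, u, rfl, p, hp, hl, hint⟩

lemma ballThrough_comp {r s : ℝ} {U W : Set V} {u z : V}
    (hu : u ∈ ballThrough G r U W) (hz : z ∈ ballThrough G s {u} W) :
    z ∈ ballThrough G (r + s) U W := by
  obtain ⟨huW, v0, hv0, p, hp, hpl, hpint⟩ := hu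
  obtain ⟨hzW, u', hu', q, hq, hql, hqint⟩ := hz
  obtain rfl : u' = u := hu'
  have hcond : ∀ w' ∈ (p.append q).support, w' = v0 ∨ w' = z ∨ w' ∈ W := by
    intro w' hw'
    rw [Walk.support_append] at hw'
    rcases List.mem_append.mp hw' with h1 | h1
    · rcases mem_support_cases p h1 with h2 | h2 | h2
      · exact Or.inl h2
      · exact Or.inr (Or.inr (hpint _ h2))
      · exact Or.inr (Or.inr (h2 ▸ huW))
    · have h1' : w' ∈ q.support := List.tail_subset _ h1
      rcases mem_support_cases q h1' with h2 | h2 | h2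
      · exact Or.inr (Or.inr (h2 ▸ huW))
      · exact Or.inr (Or.inr (hqint _ h2))
      · exact Or.inr (Or.inl h2)
  obtain ⟨p', hp', hpl', hint'⟩ := exists_path_of_walk (p.append q) hcond
  refine ⟨hzW, v0, hv0, p', hp', ?_, hint'⟩
  have hLL : ((p.append q).length : ℝ) = (p.length : ℝ) + (q.length : ℝ) := by
    rw [Walk.length_append]; push_cast; ring
  have h1 : ((p'.length : ℝ)) ≤ ((p.append q).length : ℝ) := by exact_mod_cast hpl'
  linarith

lemma conn_of_mem_two_balls {r s : ℝ} {W : Set V} {a b w : V}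
    (ha : w ∈ ballThrough G r {a} W) (hb : w ∈ ballThrough G s {b} W) :
    ∃ p : G.Walk a b, p.IsPath ∧ ((p.length : ℝ) ≤ r + s) ∧
      ∀ z ∈ p.support.tail.dropLast, z ∈ W := by
  obtain ⟨hwW, a', ha', p, hp, hpl, hpint⟩ := ha
  have ha2 : a = a' := (Set.mem_singleton_iff.mp ha').symm
  subst ha2
  obtain ⟨-, b', hb', q, hq, hql, hqint⟩ := hb
  have hb2 : b = b' := (Set.mem_singleton_iff.mp hb').symm
  subst hb2
  have hcond : ∀ z ∈ (p.append q.reverse).support, z = a ∨ z = b ∨ z ∈ W := by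
    intro z hz
    rw [Walk.support_append] at hz
    rcases List.mem_append.mp hz with h1 | h1
    · rcases mem_support_cases p h1 with h2 | h2 | h2
      · exact Or.inl h2
      · exact Or.inr (Or.inr (hpint _ h2))
      · exact Or.inr (Or.inr (h2 ▸ hwW))
    · have h1' : z ∈ q.reverse.support := List.tail_subset _ h1
      rw [Walk.support_reverse] at h1'
      have h1'' : z ∈ q.support := List.mem_reverse.mp h1'
      rcases mem_support_cases q h1'' with h2 | h2 | h2
      · exact Or.inr (Or.inl h2)
      · exact Or.inr (Or.inr (hqint _ h2))
      · exact Or.inr (Or.inr (h2 ▸ hwW))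
  obtain ⟨p', hp', hpl', hint'⟩ := exists_path_of_walk (p.append q.reverse) hcond
  refine ⟨p', hp', ?_, hint'⟩
  have hLL : (p.append q.reverse).length = p.length + q.length := by
    rw [Walk.length_append, Walk.length_reverse]
  have h1 : ((p'.length : ℝ)) ≤ ((p.append q.reverse).length : ℝ) := by exact_mod_cast hpl'
  rw [hLL] at h1
  push_cast at h1
  linarith

/-- Single-vertex ball of radius `r · ℓ` through `W`. -/
def bT (G : SimpleGraph V) (W : Set V) (ℓ : ℕ) (r : ℕ) (v : V) : Set V :=
  ballThrough G ((r : ℝ) * (ℓ : ℝ)) {v} W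

/-- The ball together with its centre. -/
def DT (G : SimpleGraph V) (W : Set V) (ℓ : ℕ) (r : ℕ) (v : V) : Set V :=
  bT G W ℓ r v ∪ {v}

lemma bT_mono {W : Set V} {ℓ : ℕ} {r s : ℕ} (hrs : r ≤ s) (v : V) :
    bT G W ℓ r v ⊆ bT G W ℓ s v := by
  apply ballThrough_mono
  have : ((r : ℝ)) ≤ (s : ℝ) := by exact_mod_cast hrs
  have hl : (0:ℝ) ≤ (ℓ : ℝ) := by positivity
  nlinarith

lemma DT_mono {W : Set V} {ℓ : ℕ} {r s : ℕ} (hrs : r ≤ s) (v : V) :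
    DT G W ℓ r v ⊆ DT G W ℓ s v :=
  Set.union_subset_union_left _ (bT_mono hrs v)

lemma DT_comp {W : Set V} {ℓ : ℕ} {r : ℕ} {v u z : V}
    (hu : u ∈ DT G W ℓ r v) (hz : z ∈ ballThrough G (ℓ : ℝ) {u} W) :
    z ∈ bT G W ℓ (r + 1) v := by
  have heq : ((r : ℝ)) * (ℓ : ℝ) + (ℓ : ℝ) = ((r + 1 : ℕ) : ℝ) * (ℓ : ℝ) := by
    push_cast; ring
  rcases hu with hu | hu
  · have h := ballThrough_comp hu hz
    rw [heq] at h
    exact h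
  · obtain rfl : u = v := hu
    apply ballThrough_mono (show (ℓ:ℝ) ≤ ((r+1:ℕ):ℝ) * ℓ by push_cast; nlinarith [Nat.cast_nonneg (α := ℝ) r, Nat.cast_nonneg (α := ℝ) ℓ]) hz

lemma claim_lemma [Fintype V] (G : SimpleGraph V) (W : Set V) (ℓ t : ℕ) (ht1 : 1 ≤ t)
    (hW : 4 * t - 2 ≤ W.ncard)
    (hexp : ∀ U : Set V, U.ncard = t →
      (W.ncard : ℝ) / 2 < ((ballThrough G (ℓ : ℝ) U W).ncard : ℝ))
    (K : ℕ) :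
    ∀ d : ℕ, d ≤ K - 1 → ∀ F : Set V,
      (∀ v ∈ F, (DT G W ℓ (K - 1) v).ncard ≤ t - 1) → F.ncard ≤ 2 ^ d →
      (⋃ v ∈ F, DT G W ℓ (K - 1 - d) v).ncard ≤ t - 1 := by
  intro d
  induction d with
  | zero =>
    intro _ F hfe hcard
    rcases F.eq_empty_or_nonempty with rfl | hne
    · simp
    · have h0 : 0 < F.ncard := (Set.ncard_pos (Set.toFinite F)).mpr hne
      have h1 : F.ncard = 1 := by omega
      rcases Set.ncard_eq_one.mp h1 with ⟨a, rfl⟩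
      rw [Nat.sub_zero]
      simpa using hfe a rfl
  | succ d ih =>
    intro hdK F hfe hcard
    by_cases hsmall : F.ncard ≤ 2 ^ d
    · refine le_trans (Set.ncard_le_ncard ?_ (Set.toFinite _)) (ih (by omega) F hfe hsmall)
      exact Set.iUnion₂_mono fun v _ => DT_mono (by omega) v
    · push_neg at hsmall
      by_contra hbig
      push_neg at hbig
      have hpool : t ≤ (⋃ v ∈ F, DT G W ℓ (K - 1 - (d + 1)) v).ncard := by omega
      obtain ⟨U, hUsub, hUcard⟩ := Set.exists_subset_card_eq hpool
      classical
      have hcardF : F.toFinset.card = F.ncard := (Set.ncard_eq_toFinset_card' F).symm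
      obtain ⟨s₁, hs₁sub, hs₁card⟩ := Finset.exists_subset_card_eq (show 2 ^ d ≤ F.toFinset.card by omega)
      set F₁ : Set V := (↑s₁ : Set V) with hF₁
      have hF₁F : F₁ ⊆ F := by
        intro v hv
        exact Set.mem_toFinset.mp (hs₁sub hv)
      set F₂ : Set V := F \ F₁ with hF₂
      have hF₁card : F₁.ncard = 2 ^ d := by rw [hF₁, Set.ncard_coe_finset]; exact hs₁card
      have hF₂card : F₂.ncard ≤ 2 ^ d := by
        rw [hF₂, Set.ncard_diff hF₁F]
        have hps : 2 ^ (d + 1) = 2 ^ d + 2 ^ d := by rw [pow_succ]; ring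
        omega
      have hFsplit : F = F₁ ∪ F₂ := (Set.union_diff_cancel hF₁F).symm
      have hsub2 : ballThrough G (ℓ : ℝ) U W ⊆
          (⋃ v ∈ F₁, DT G W ℓ (K - 1 - d) v) ∪ (⋃ v ∈ F₂, DT G W ℓ (K - 1 - d) v) := by
        intro z hz
        obtain ⟨u, huU, hzu⟩ := mem_ball_singleton hz
        have huP := hUsub huU
        rcases Set.mem_iUnion₂.mp huP with ⟨v, hvF, huv⟩
        have hznext : z ∈ bT G W ℓ (K - 1 - (d + 1) + 1) v := DT_comp huv hzu
        have harith : K - 1 - (d + 1) + 1 = K - 1 - d := by omega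
        rw [harith] at hznext
        have hzD : z ∈ DT G W ℓ (K - 1 - d) v := Or.inl hznext
        rw [hFsplit] at hvF
        rcases hvF with h | h
        · exact Or.inl (Set.mem_biUnion h hzD)
        · exact Or.inr (Set.mem_biUnion h hzD)
      have hb1 := ih (by omega) F₁ (fun v hv => hfe v (hF₁F hv)) (le_of_eq hF₁card)
      have hb2 := ih (by omega) F₂ (fun v hv => hfe v hv.1) hF₂card
      have hble : (ballThrough G (ℓ : ℝ) U W).ncard ≤ (t - 1) + (t - 1) :=
        le_trans (Set.ncard_le_ncard hsub2 (Set.toFinite _))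
          (le_trans (Set.ncard_union_le _ _) (add_le_add hb1 hb2))
      have hlt := hexp U hUcard
      have h1 : ((4 * t - 2 : ℕ) : ℝ) ≤ (W.ncard : ℝ) := Nat.cast_le.mpr hW
      have h2 : ((ballThrough G (ℓ : ℝ) U W).ncard : ℝ) ≤ ((t - 1 : ℕ) : ℝ) + ((t - 1 : ℕ) : ℝ) := by
        exact_mod_cast hble
      rw [Nat.cast_sub (by omega : 2 ≤ 4 * t)] at h1
      rw [Nat.cast_sub (by omega : 1 ≤ t)] at h2
      push_cast at h1 h2
      linarith

end ConnectOnePairAux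

open ConnectOnePairAux in
/-- If all `t`-sets have large balls through `W`, then among `2t−1` given pairs of
(all-distinct) vertices, some pair is joined by a short path through `W`. -/
theorem connect_one_pair
    (n ℓ t : ℕ) (hℓ1 : 1 ≤ ℓ) (hℓn : ℓ ≤ n) (ht1 : 1 ≤ t) (htn : t ≤ n)
    (V : Type) [Fintype V] (G : SimpleGraph V) (hcard : Nat.card V = n)
    (W : Set V) (hW : 4 * t - 2 ≤ W.ncard)
    (hexp : ∀ U : Set V, U.ncard = t →
      (W.ncard : ℝ) / 2 < ((ballThrough G (ℓ : ℝ) U W).ncard : ℝ))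
    (x y : Fin (2 * t - 1) → V)
    (hx : Function.Injective x) (hy : Function.Injective y)
    (hxy : ∀ i j, x i ≠ y j) :
    ∃ (j : Fin (2 * t - 1)) (p : G.Walk (x j) (y j)),
      p.IsPath ∧ ((p.length : ℝ) ≤ 4 * ℓ * Real.logb 2 n) ∧
      ∀ w ∈ p.support.tail.dropLast, w ∈ W := by
  classical
  by_contra hcon
  set K : ℕ := Nat.clog 2 t + 2 with hK
  -- basic numeric facts
  have hnW : W.ncard ≤ n := by
    rw [← hcard, ← Set.ncard_univ]
    exact Set.ncard_le_ncard (Set.subset_univ W) (Set.toFinite _)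
  have hn4t : 4 * t - 2 ≤ n := le_trans hW hnW
  have hn2t : 2 * t ≤ n := by omega
  have hn2 : 2 ≤ n := by omega
  have hl0 : (0:ℝ) < (ℓ : ℝ) := by exact_mod_cast hℓ1
  have hlogn1 : (1:ℝ) ≤ Real.logb 2 (n : ℝ) := by
    have h2 : Real.logb 2 (2:ℝ) = 1 := Real.logb_self_eq_one (by norm_num)
    rw [← h2]
    exact Real.logb_le_logb_of_le (by norm_num) (by norm_num) (by exact_mod_cast hn2)
  -- the length budget
  have hKbudget : (K : ℝ) * (ℓ : ℝ) + (K : ℝ) * (ℓ : ℝ) ≤ 4 * (ℓ : ℝ) * Real.logb 2 (n : ℝ) := by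
    have hKr : (K : ℝ) = (Nat.clog 2 t : ℝ) + 2 := by rw [hK]; push_cast; ring
    have h2K : 2 * (K : ℝ) ≤ 4 * Real.logb 2 (n : ℝ) := by
      rcases eq_or_lt_of_le ht1 with h1 | h2
      · have hclog : Nat.clog 2 t = 0 := by rw [← h1]; exact Nat.clog_one_right 2
        rw [hKr, hclog]
        push_cast
        linarith
      · -- 2 ≤ t
        have ht2 : 2 ≤ t := h2
        have hclogpos : 0 < Nat.clog 2 t := Nat.clog_pos (by norm_num) ht2
        have hp := Nat.pow_pred_clog_lt_self (b := 2) (by norm_num) (x := t) h2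
        have hpc : ((2:ℝ)) ^ (Nat.clog 2 t - 1) < (t : ℝ) := by exact_mod_cast hp
        have hlog1 : ((Nat.clog 2 t - 1 : ℕ) : ℝ) < Real.logb 2 (t : ℝ) := by
          have hcalc : ((Nat.clog 2 t - 1 : ℕ) : ℝ) =
              Real.logb 2 ((2:ℝ) ^ (Nat.clog 2 t - 1)) := by
            rw [Real.logb_pow, Real.logb_self_eq_one (by norm_num)]
            ring
          rw [hcalc]
          exact Real.logb_lt_logb (by norm_num) (by positivity) hpc
        have hccast : ((Nat.clog 2 t - 1 : ℕ) : ℝ) = (Nat.clog 2 t : ℝ) - 1 := by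
          rw [Nat.cast_sub hclogpos]
          norm_num
        have hlogt1 : (1:ℝ) ≤ Real.logb 2 (t : ℝ) := by
          have h22 : Real.logb 2 (2:ℝ) = 1 := Real.logb_self_eq_one (by norm_num)
          rw [← h22]
          exact Real.logb_le_logb_of_le (by norm_num) (by norm_num) (by exact_mod_cast ht2)
        have hmul : Real.logb 2 ((2:ℝ) * (t:ℝ)) = 1 + Real.logb 2 (t:ℝ) := by
          rw [Real.logb_mul (by norm_num) (by positivity)]
          rw [Real.logb_self_eq_one (by norm_num)]
        have h2tn : Real.logb 2 ((2:ℝ) * (t:ℝ)) ≤ Real.logb 2 (n : ℝ) := by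
          apply Real.logb_le_logb_of_le (by norm_num) (by positivity)
          exact_mod_cast hn2t
        rw [hKr]
        rw [hccast] at hlog1
        linarith
    nlinarith
  -- feebleness: at most among any collection, no t distinct feeble vertices
  have hK1 : 1 ≤ K := by omega
  -- explosion for non-feeble vertices
  have hexplode : ∀ v : V, ¬ ((DT G W ℓ (K - 1) v).ncard ≤ t - 1) →
      (W.ncard : ℝ) / 2 < ((bT G W ℓ K v).ncard : ℝ) := by
    intro v hv
    have hge : t ≤ (DT G W ℓ (K - 1) v).ncard := by omega
    obtain ⟨U, hUsub, hUcard⟩ := Set.exists_subset_card_eq hge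
    have hlt := hexp U hUcard
    have hsub : ballThrough G (ℓ : ℝ) U W ⊆ bT G W ℓ K v := by
      intro z hz
      obtain ⟨u, huU, hzu⟩ := mem_ball_singleton hz
      have h := DT_comp (hUsub huU) hzu
      have harith : K - 1 + 1 = K := by omega
      rw [harith] at h
      exact h
    refine lt_of_lt_of_le hlt ?_
    exact_mod_cast Nat.cast_le.mpr (Set.ncard_le_ncard hsub (Set.toFinite _))
  -- each pair has a feeble member
  have hdisj : ∀ j, ((DT G W ℓ (K - 1) (x j)).ncard ≤ t - 1) ∨
      ((DT G W ℓ (K - 1) (y j)).ncard ≤ t - 1) := by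
    intro j
    by_contra hc
    push_neg at hc
    obtain ⟨hcx, hcy⟩ := hc
    have hx2 := hexplode _ (not_le.mpr hcx)
    have hy2 := hexplode _ (not_le.mpr hcy)
    have hAW : bT G W ℓ K (x j) ⊆ W := fun z hz => hz.1
    have hBW : bT G W ℓ K (y j) ⊆ W := fun z hz => hz.1
    have hAB : (bT G W ℓ K (x j) ∩ bT G W ℓ K (y j)).Nonempty := by
      by_contra hemp
      rw [Set.not_nonempty_iff_eq_empty] at hemp
      have hdis : Disjoint (bT G W ℓ K (x j)) (bT G W ℓ K (y j)) :=
        Set.disjoint_iff_inter_eq_empty.mpr hemp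
      have hun : (bT G W ℓ K (x j) ∪ bT G W ℓ K (y j)).ncard =
          (bT G W ℓ K (x j)).ncard + (bT G W ℓ K (y j)).ncard := Set.ncard_union_eq hdis
      have hle : (bT G W ℓ K (x j) ∪ bT G W ℓ K (y j)).ncard ≤ W.ncard :=
        Set.ncard_le_ncard (Set.union_subset hAW hBW) (Set.toFinite W)
      rw [hun] at hle
      have hle' : ((bT G W ℓ K (x j)).ncard : ℝ) + ((bT G W ℓ K (y j)).ncard : ℝ)
          ≤ (W.ncard : ℝ) := by exact_mod_cast hle
      linarith
    obtain ⟨w, hwA, hwB⟩ := hAB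
    obtain ⟨p', hp', hlen, hint⟩ := conn_of_mem_two_balls hwA hwB
    exact hcon ⟨j, p', hp', le_trans hlen hKbudget, hint⟩
  -- choose a feeble member of each pair
  set c : Fin (2 * t - 1) → V := fun j =>
    if (DT G W ℓ (K - 1) (x j)).ncard ≤ t - 1 then x j else y j with hc
  have hcf : ∀ j, (DT G W ℓ (K - 1) (c j)).ncard ≤ t - 1 := by
    intro j
    simp only [hc]
    by_cases h : (DT G W ℓ (K - 1) (x j)).ncard ≤ t - 1
    · rw [if_pos h]; exact h
    · rw [if_neg h]; exact (hdisj j).resolve_left h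
  have hcinj : Function.Injective c := by
    intro i j hij
    simp only [hc] at hij
    by_cases hi : (DT G W ℓ (K - 1) (x i)).ncard ≤ t - 1 <;>
      by_cases hj : (DT G W ℓ (K - 1) (x j)).ncard ≤ t - 1
    · rw [if_pos hi, if_pos hj] at hij; exact hx hij
    · rw [if_pos hi, if_neg hj] at hij; exact absurd hij (hxy i j)
    · rw [if_neg hi, if_pos hj] at hij; exact absurd hij.symm (hxy j i)
    · rw [if_neg hi, if_neg hj] at hij; exact hy hij
  have himg : (Finset.univ.image c).card = 2 * t - 1 := by
    rw [Finset.card_image_of_injective _ hcinj, Finset.card_univ, Fintype.card_fin]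
  obtain ⟨s, hssub, hscard⟩ := Finset.exists_subset_card_eq (show t ≤ (Finset.univ.image c).card by omega)
  have hfe : ∀ v ∈ (↑s : Set V), (DT G W ℓ (K - 1) v).ncard ≤ t - 1 := by
    intro v hv
    have hv' : v ∈ Finset.univ.image c := hssub hv
    obtain ⟨j, -, rfl⟩ := Finset.mem_image.mp hv'
    exact hcf j
  have hFcard : (↑s : Set V).ncard = t := by rw [Set.ncard_coe_finset]; exact hscard
  have hclaim := claim_lemma G W ℓ t ht1 hW hexp K (Nat.clog 2 t) (by omega) (↑s : Set V) hfe
    (by rw [hFcard]; exact Nat.le_pow_clog (by norm_num) t)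
  have hsubpool : (↑s : Set V) ⊆ ⋃ v ∈ (↑s : Set V), DT G W ℓ (K - 1 - Nat.clog 2 t) v :=
    fun v hv => Set.mem_biUnion hv (Or.inr rfl)
  have hfinal : t ≤ t - 1 := by
    calc t = (↑s : Set V).ncard := hFcard.symm
    _ ≤ (⋃ v ∈ (↑s : Set V), DT G W ℓ (K - 1 - Nat.clog 2 t) v).ncard :=
        Set.ncard_le_ncard hsubpool (Set.toFinite _)
    _ ≤ t - 1 := hclaim
  omega
end

section
/- Let k ≥ 1 and b ≥ 1 be integers and let G be the complete bipartite graph with parts A and B of sizes |A| = 2k+1 and |B| = b. Then any partition of the edge set of G into parts, each of which is either the edge set of a cycle of G or a single edge, has at least (3/2 − 1/(4k+2))·b parts. -/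
/-- `s` is the edge set of a cycle in `G`. -/
def IsCycleEdgeSet {V : Type} (G : SimpleGraph V) (s : Set (Sym2 V)) : Prop :=
  ∃ (v : V) (c : G.Walk v v), c.IsCycle ∧ s = {e | e ∈ c.edges}

lemma alt_count {A B : Type} {u v : A ⊕ B} (p : (completeBipartiteGraph A B).Walk u v) :
    2 * p.support.countP (fun x => x.isLeft) =
      p.length + (if u.isLeft then 1 else 0) + (if v.isLeft then 1 else 0) := by
  induction p with
  | nil => simp [List.countP_cons]; split <;> simp
  | cons h p ih =>
    rename_i a c d
    simp only [SimpleGraph.Walk.support_cons, List.countP_cons,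
      SimpleGraph.Walk.length_cons] at *
    rcases h with ⟨h1, h2⟩ | ⟨h1, h2⟩ <;>
      rcases a with a|a <;> rcases c with c|c <;> simp_all <;> omega

lemma cycle_length_le {n b : ℕ} {v : Fin (n+1) ⊕ Fin b}
    (c : (completeBipartiteGraph (Fin (n+1)) (Fin b)).Walk v v) (hc : c.IsCycle) :
    c.length ≤ 2 * (n + 1) := by
  have h1 := alt_count c
  have h2 : c.support = v :: c.support.tail := c.support_eq_cons
  rw [h2, List.countP_cons] at h1
  have hlen : c.length = 2 * c.support.tail.countP (fun x => x.isLeft) := by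
    split at h1 <;> omega
  have hnd : c.support.tail.Nodup := hc.2
  set l := c.support.tail.filter (fun x => x.isLeft) with hl
  have hcount : c.support.tail.countP (fun x => x.isLeft) = l.length :=
    List.countP_eq_length_filter
  have hlnd : l.Nodup := hnd.filter _
  have hmemleft : ∀ x ∈ l, ∃ a : Fin (n+1), x = Sum.inl a := by
    intro x hx
    rw [hl, List.mem_filter] at hx
    exact Sum.isLeft_iff.mp (by simpa using hx.2)
  have hmapnd : (l.map (fun x => x.getLeft?.getD 0)).Nodup := by
    refine hlnd.map_on ?_
    intro x hx y hy hxy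
    obtain ⟨a, rfl⟩ := hmemleft x hx
    obtain ⟨a', rfl⟩ := hmemleft y hy
    simpa using hxy
  have := hmapnd.length_le_card
  simp only [List.length_map, Fintype.card_fin] at this
  omega

lemma edge_form {a b : ℕ} {e : Sym2 (Fin a ⊕ Fin b)}
    (he : e ∈ (completeBipartiteGraph (Fin a) (Fin b)).edgeSet) :
    ∃ (x : Fin a) (y : Fin b), e = s(Sum.inl x, Sum.inr y) := by
  induction e using Sym2.ind with
  | _ u v =>
    rw [SimpleGraph.mem_edgeSet] at he
    rcases he with ⟨h1, h2⟩ | ⟨h1, h2⟩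
    · rcases u with x|x <;> rcases v with y|y <;> simp_all
    · rcases u with x|x <;> rcases v with y|y <;> simp_all

lemma edge_form_right {a b : ℕ} {e : Sym2 (Fin a ⊕ Fin b)} {j : Fin b}
    (he : e ∈ (completeBipartiteGraph (Fin a) (Fin b)).edgeSet)
    (hj : Sum.inr j ∈ e) : ∃ x : Fin a, e = s(Sum.inl x, Sum.inr j) := by
  obtain ⟨x, y, rfl⟩ := edge_form he
  rw [Sym2.mem_iff] at hj
  rcases hj with h | h
  · exact absurd h (by simp)
  · exact ⟨x, by rw [← h]⟩

lemma edgeSet_eq (a b : ℕ) :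
    (completeBipartiteGraph (Fin a) (Fin b)).edgeSet =
      ↑(Finset.univ.image (fun p : Fin a × Fin b => s(Sum.inl p.1, Sum.inr p.2))) := by
  ext e
  simp only [Finset.coe_image, Finset.coe_univ, Set.image_univ, Set.mem_range]
  constructor
  · intro he
    obtain ⟨x, y, rfl⟩ := edge_form he
    exact ⟨(x, y), rfl⟩
  · rintro ⟨⟨x, y⟩, rfl⟩
    simp [SimpleGraph.mem_edgeSet]

lemma edgeFinset_card (a b : ℕ) :
    (Finset.univ.image (fun p : Fin a × Fin b => s(Sum.inl p.1, Sum.inr p.2))).card = a * b := by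
  rw [Finset.card_image_of_injective _ ?_, Finset.card_univ, Fintype.card_prod,
    Fintype.card_fin, Fintype.card_fin]
  intro p q h
  simp only [Sym2.eq, Sym2.rel_iff', Prod.mk.injEq, Prod.swap_prod_mk] at h
  rcases h with ⟨h1, h2⟩ | ⟨h1, h2⟩ <;> simp_all [Prod.ext_iff]

lemma cycle_even_at {V : Type} [DecidableEq V] {G : SimpleGraph V} {v : V} {c : G.Walk v v}
    (hc : c.IsCycle) (x : V) : Even (c.edges.countP (fun e => x ∈ e)) :=
  (hc.isTrail.even_countP_edges_iff x).mpr (fun h => absurd rfl h)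

lemma filter_card_countP {V : Type} [DecidableEq V] (l : List (Sym2 V)) (hl : l.Nodup)
    (x : V) : (l.toFinset.filter (fun e => x ∈ e)).card = l.countP (fun e => x ∈ e) := by
  have : Finset.filter (fun e => x ∈ e) l.toFinset
      = Finset.filter (fun e => (decide (x ∈ e)) = true) l.toFinset := by
    simp
  rw [this, ← List.toFinset_filter, List.toFinset_card_of_nodup (hl.filter _),
    List.countP_eq_length_filter]

/-- Any decomposition of the complete bipartite graph `K_{2k+1,b}` into cycles and edges
has at least `(3/2 − 1/(4k+2))·b` parts. -/
theorem completeBipartite_lower_bound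
    (k b : ℕ) (hk : 1 ≤ k) (hb : 1 ≤ b)
    (G : SimpleGraph (Fin (2 * k + 1) ⊕ Fin b))
    (hG : G = completeBipartiteGraph (Fin (2 * k + 1)) (Fin b)) :
    ∀ (m : ℕ) (c : Fin m → Set (Sym2 (Fin (2 * k + 1) ⊕ Fin b)))
      (E₀ : Set (Sym2 (Fin (2 * k + 1) ⊕ Fin b))),
      (∀ i, IsCycleEdgeSet G (c i)) →
      E₀ ⊆ G.edgeSet →
      (∀ i j, i ≠ j → Disjoint (c i) (c j)) →
      (∀ i, Disjoint (c i) E₀) →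
      ((⋃ i, c i) ∪ E₀ = G.edgeSet) →
      ((3 : ℝ) / 2 - 1 / (4 * k + 2)) * b ≤ (m : ℝ) + (E₀.ncard : ℝ) := by
  subst hG
  intro m c E₀ hcyc hE₀ hdisj hdisjE hcover
  classical
  choose v w hw hcset using hcyc
  set F : Fin m → Finset (Sym2 (Fin (2 * k + 1) ⊕ Fin b)) :=
    fun i => (w i).edges.toFinset with hF
  have hcF : ∀ i, c i = ↑(F i) := by
    intro i
    rw [hcset i]
    ext e
    simp [hF]
  have hE₀fin : E₀.Finite := Set.toFinite _
  have hE₀card : E₀.ncard = hE₀fin.toFinset.card := Set.ncard_eq_toFinset_card _ hE₀fin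
  have hcsub : ∀ i, c i ⊆ (completeBipartiteGraph (Fin (2 * k + 1)) (Fin b)).edgeSet := by
    intro i
    rw [← hcover]
    intro e he
    exact Or.inl (Set.mem_iUnion.mpr ⟨i, he⟩)
  -- every right vertex is covered by an E₀ edge
  have hstep1 : ∀ j : Fin b, ∃ e ∈ E₀, Sum.inr j ∈ e := by
    intro j
    by_contra hno
    push_neg at hno
    set Sj : Finset (Sym2 (Fin (2 * k + 1) ⊕ Fin b)) :=
      Finset.univ.image (fun x : Fin (2 * k + 1) => s(Sum.inl x, Sum.inr j)) with hSj
    have hSjcard : Sj.card = 2 * k + 1 := by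
      rw [hSj, Finset.card_image_of_injective _ ?_, Finset.card_univ, Fintype.card_fin]
      intro x y hxy
      simpa [Sym2.eq, Sym2.rel_iff', Prod.ext_iff] using hxy
    have hSjeq : Sj = Finset.univ.biUnion
        (fun i => (F i).filter (fun e => Sum.inr j ∈ e)) := by
      ext e
      simp only [Finset.mem_biUnion, Finset.mem_univ, Finset.mem_filter, true_and,
        hSj, Finset.mem_image]
      constructor
      · rintro ⟨x, -, rfl⟩
        have he : s(Sum.inl x, Sum.inr j)
            ∈ (completeBipartiteGraph (Fin (2 * k + 1)) (Fin b)).edgeSet := by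
          simp [SimpleGraph.mem_edgeSet]
        rw [← hcover] at he
        rcases he with he | he
        · obtain ⟨i, hi⟩ := Set.mem_iUnion.mp he
          rw [hcF i] at hi
          exact ⟨i, hi, by simp⟩
        · exact absurd (by simp : Sum.inr j ∈ s(Sum.inl x, Sum.inr j)) (hno _ he)
      · rintro ⟨i, hi, hj⟩
        have hee : e ∈ (completeBipartiteGraph (Fin (2 * k + 1)) (Fin b)).edgeSet :=
          hcsub i (by rw [hcF i]; exact hi)
        obtain ⟨x, rfl⟩ := edge_form_right hee hj
        exact ⟨x, rfl⟩
    have heven : Even Sj.card := by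
      rw [hSjeq, Finset.card_biUnion ?_]
      · apply Finset.even_sum
        intro i _
        rw [hF]
        rw [filter_card_countP _ (hw i).edges_nodup]
        exact cycle_even_at (hw i) _
      · intro i _ i' _ hne
        have := hdisj i i' hne
        rw [hcF i, hcF i', Finset.disjoint_coe] at this
        exact Finset.disjoint_filter_filter this
    rw [hSjcard] at heven
    obtain ⟨t, ht⟩ := heven
    omega
  choose g hg1 hg2 using hstep1
  have hginj : Function.Injective g := by
    intro j j' hjj
    obtain ⟨x, hx⟩ := edge_form_right (hE₀ (hg1 j)) (hg2 j)
    have h2 := hg2 j'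
    rw [hjj] at hx
    rw [hx, Sym2.mem_iff] at h2
    rcases h2 with h | h
    · exact absurd h (by simp)
    · exact (Sum.inr.injEq _ _ ▸ congrArg id h) ▸ (by injection h.symm with h'; exact (h' ▸ rfl))
  have hbE : b ≤ hE₀fin.toFinset.card := by
    have hcard : (Finset.univ.image g).card = b := by
      rw [Finset.card_image_of_injective _ hginj, Finset.card_univ, Fintype.card_fin]
    refine le_trans (le_of_eq hcard.symm) (Finset.card_le_card ?_)
    intro e he
    obtain ⟨j, -, rfl⟩ := Finset.mem_image.mp he
    exact hE₀fin.mem_toFinset.mpr (hg1 j)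
  -- total edge count
  have hFcard : ∀ i, (F i).card ≤ 2 * (2 * k + 1) := by
    intro i
    rw [hF]
    dsimp only
    rw [List.toFinset_card_of_nodup (hw i).edges_nodup, SimpleGraph.Walk.length_edges]
    exact cycle_length_le (w i) (hw i)
  have htotal : (2 * k + 1) * b ≤ m * (2 * (2 * k + 1)) + hE₀fin.toFinset.card := by
    have hsub : Finset.univ.image
          (fun p : Fin (2 * k + 1) × Fin b => s(Sum.inl p.1, Sum.inr p.2))
        ⊆ Finset.univ.biUnion F ∪ hE₀fin.toFinset := by
      intro e he
      have hee : e ∈ (completeBipartiteGraph (Fin (2 * k + 1)) (Fin b)).edgeSet := by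
        rw [edgeSet_eq]
        exact_mod_cast he
      rw [← hcover] at hee
      rcases hee with h | h
      · obtain ⟨i, hi⟩ := Set.mem_iUnion.mp h
        rw [hcF i] at hi
        exact Finset.mem_union_left _ (Finset.mem_biUnion.mpr ⟨i, Finset.mem_univ _, hi⟩)
      · exact Finset.mem_union_right _ (hE₀fin.mem_toFinset.mpr h)
    calc (2 * k + 1) * b
        = (Finset.univ.image
            (fun p : Fin (2 * k + 1) × Fin b => s(Sum.inl p.1, Sum.inr p.2))).card :=
          (edgeFinset_card _ _).symm
      _ ≤ (Finset.univ.biUnion F ∪ hE₀fin.toFinset).card := Finset.card_le_card hsub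
      _ ≤ (Finset.univ.biUnion F).card + hE₀fin.toFinset.card := Finset.card_union_le _ _
      _ ≤ (∑ i, (F i).card) + hE₀fin.toFinset.card := by
          gcongr
          exact Finset.card_biUnion_le
      _ ≤ m * (2 * (2 * k + 1)) + hE₀fin.toFinset.card := by
          gcongr
          calc (∑ i, (F i).card) ≤ ∑ _i : Fin m, 2 * (2 * k + 1) :=
                Finset.sum_le_sum (fun i _ => hFcard i)
            _ = m * (2 * (2 * k + 1)) := by simp [Finset.sum_const, mul_comm]
  -- arithmetic
  rw [hE₀card]
  set E : ℕ := hE₀fin.toFinset.card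
  have h1 : (b : ℝ) ≤ E := by exact_mod_cast hbE
  have h2 : ((2 * k + 1) * b : ℝ) ≤ m * (2 * (2 * k + 1)) + E := by exact_mod_cast htotal
  have hK : (0 : ℝ) < 4 * (k : ℝ) + 2 := by positivity
  rw [← mul_le_mul_iff_of_pos_right hK]
  have hinv : (1 : ℝ) / (4 * (k : ℝ) + 2) * (4 * (k : ℝ) + 2) = 1 := by
    field_simp
  nlinarith [mul_le_mul_of_nonneg_right h1 (show (0 : ℝ) ≤ 4 * (k : ℝ) + 1 by positivity)]
end
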